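/- arXiv:1802.08070 — 4 statements merged into one kernel-verified Lean document; each statement's English description precedes it below -/
import Mathlib

section
/- The final lfg H-coalgebra is a subcoalgebra of the final H-coalgebra: the unique coalgebra homomorphism from the final lfg coalgebra to the final coalgebra is a monomorphism. -/
open CategoryTheory CategoryTheory.Limits

universe v u

namespace LFF

variable {C : Type u} [Category.{v} C]

/-- An object is finitely presentable if its hom-functor preserves filtered colimits. -/
def IsFP (X : C) : Prop :=
  ∀ (J : Type v) [SmallCategory J] [IsFiltered J] (F : J ⥤ C)
    (c : Cocone F), Nonempty (IsColimit c) →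
    Nonempty (IsColimit ((coyoneda.obj (Opposite.op X)).mapCocone c))

/-- An object is finitely generated if its hom-functor preserves filtered colimits
of diagrams all of whose connecting morphisms are monomorphisms. -/
def IsFG (X : C) : Prop :=
  ∀ (J : Type v) [SmallCategory J] [IsFiltered J] (F : J ⥤ C),
    (∀ ⦃i j : J⦄ (f : i ⟶ j), Mono (F.map f)) →
    ∀ (c : Cocone F), Nonempty (IsColimit c) →
    Nonempty (IsColimit ((coyoneda.obj (Opposite.op X)).mapCocone c))

/-- A category is locally finitely presentable if it is cocomplete, the finitely
presentable objects are essentially small, and every object is a filtered colimit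
of finitely presentable objects. -/
def IsLFP (C : Type u) [Category.{v} C] : Prop :=
  HasColimits C ∧
  EssentiallySmall.{v} (ObjectProperty.FullSubcategory (fun X : C => IsFP X)) ∧
  ∀ X : C, ∃ (J : Type v) (_ : SmallCategory J) (_ : IsFiltered J)
    (F : J ⥤ C) (c : Cocone F),
      (∀ j, IsFP (F.obj j)) ∧ Nonempty (IsColimit c) ∧ Nonempty (c.pt ≅ X)

/-- A functor is finitary if it preserves filtered colimits. -/
def IsFinitary (H : C ⥤ C) : Prop :=
  ∀ (J : Type v) [SmallCategory J] [IsFiltered J], Nonempty (PreservesColimitsOfShape J H)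

/-- An object is a strict initial object if it is initial and every morphism into it
is an isomorphism. -/
def IsStrictInitial (X : C) : Prop :=
  Nonempty (IsInitial X) ∧ ∀ (Y : C) (f : Y ⟶ X), IsIso f

/-- A monomorphism is non-empty if its domain is not a strict initial object;
a functor preserves non-empty monos if it maps them to monos. -/
def PreservesNonemptyMonos (H : C ⥤ C) : Prop :=
  ∀ ⦃X Y : C⦄ (m : X ⟶ Y), Mono m → ¬ IsStrictInitial X → Mono (H.map m)

/-- A coalgebra is locally finitely generated (lfg) if every morphism from a finitely
generated object into its carrier factors through a coalgebra homomorphism from a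
coalgebra with finitely generated carrier. -/
def IsLFGCoalgebra (H : C ⥤ C) (X : Endofunctor.Coalgebra H) : Prop :=
  ∀ (S : C), IsFG S → ∀ f : S ⟶ X.V,
    ∃ (P : Endofunctor.Coalgebra H) (h : P ⟶ X) (f' : S ⟶ P.V),
      IsFG P.V ∧ f' ≫ h.f = f

/-- An algebra is fg-iterative if every flat equation morphism `e : X ⟶ HX + A` with
`X` finitely generated has a unique solution. -/
def IsFGIterative [HasBinaryCoproducts C] (H : C ⥤ C) (A : Endofunctor.Algebra H) : Prop :=
  ∀ (X : C), IsFG X → ∀ e : X ⟶ (H.obj X ⨿ A.a),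
    ∃! s : X ⟶ A.a,
      s = e ≫ coprod.map (H.map s) (𝟙 A.a) ≫ coprod.desc A.str (𝟙 A.a)

end LFF

namespace LFFAux13
open LFF
open LFF
variable {C : Type u} [Category.{v} C]

lemma hom_factor {X : C} {J : Type v} [SmallCategory J] {F : J ⥤ C} {c : Cocone F}
    (h : IsColimit ((coyoneda.obj (Opposite.op X)).mapCocone c)) (g : X ⟶ c.pt) :
    ∃ (j : J) (t : X ⟶ F.obj j), t ≫ c.ι.app j = g := by
  obtain ⟨j, y, hy⟩ := Types.jointly_surjective _ h g
  exact ⟨j, y, hy⟩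

lemma hom_eventually_eq {X : C} {J : Type v} [SmallCategory J] [IsFiltered J] {F : J ⥤ C}
    {c : Cocone F} (h : IsColimit ((coyoneda.obj (Opposite.op X)).mapCocone c))
    {j k : J} {t₁ : X ⟶ F.obj j} {t₂ : X ⟶ F.obj k}
    (he : t₁ ≫ c.ι.app j = t₂ ≫ c.ι.app k) :
    ∃ (l : J) (f : j ⟶ l) (g : k ⟶ l), t₁ ≫ F.map f = t₂ ≫ F.map g := by
  have := (Types.FilteredColimit.isColimit_eq_iff
      (F ⋙ coyoneda.obj (Opposite.op X)) h (i := j) (j := k) (xi := t₁) (xj := t₂)).mp he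
  obtain ⟨l, f, g, hfg⟩ := this
  exact ⟨l, f, g, hfg⟩

/-- abbreviation for the presentation hypothesis -/
def HasPres (C : Type u) [Category.{v} C] : Prop :=
  ∀ X : C, ∃ (J : Type v) (_ : SmallCategory J) (_ : IsFiltered J)
    (F : J ⥤ C) (c : Cocone F),
      (∀ j, IsFP (F.obj j)) ∧ Nonempty (IsColimit c) ∧ Nonempty (c.pt ≅ X)

lemma fpToFG {X : C} (h : IsFP X) : IsFG X := fun J _ _ F _ c hc => h J F c hc

lemma eq_from_fp_elements (hpres : HasPres C) {Z W : C} {α β : Z ⟶ W}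
    (h : ∀ (Z' : C), IsFP Z' → ∀ z : Z' ⟶ Z, z ≫ α = z ≫ β) : α = β := by
  obtain ⟨J, _, _, F, c, hfp, ⟨hc⟩, ⟨e⟩⟩ := hpres Z
  have h2 : e.hom ≫ α = e.hom ≫ β := by
    apply hc.hom_ext
    intro j
    have := h _ (hfp j) (c.ι.app j ≫ e.hom)
    simpa [Category.assoc] using this
  exact (cancel_epi e.hom).mp h2

lemma mono_ι_of_filtered_monos (hpres : HasPres C) {J : Type v} [SmallCategory J] [IsFiltered J]
    {F : J ⥤ C} (hFm : ∀ ⦃i j : J⦄ (f : i ⟶ j), Mono (F.map f)) {c : Cocone F}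
    (hc : IsColimit c) (j : J) : Mono (c.ι.app j) := by
  constructor
  intro Z α β hab
  apply eq_from_fp_elements hpres
  intro Z' hZ' z
  obtain ⟨hmap⟩ := hZ' J F c ⟨hc⟩
  have hz : (z ≫ α) ≫ c.ι.app j = (z ≫ β) ≫ c.ι.app j := by
    rw [Category.assoc, Category.assoc, hab]
  obtain ⟨l, f, g, hf⟩ := hom_eventually_eq hmap hz
  let m := IsFiltered.coeqHom f g
  have hcoeq : f ≫ m = g ≫ m := IsFiltered.coeq_condition f g
  have h2 : (z ≫ α) ≫ F.map (f ≫ m) = (z ≫ β) ≫ F.map (f ≫ m) := by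
    calc (z ≫ α) ≫ F.map (f ≫ m) = ((z ≫ α) ≫ F.map f) ≫ F.map m := by
          simp [F.map_comp]
      _ = ((z ≫ β) ≫ F.map g) ≫ F.map m := by rw [hf]
      _ = (z ≫ β) ≫ F.map (g ≫ m) := by simp [F.map_comp]
      _ = (z ≫ β) ≫ F.map (f ≫ m) := by rw [hcoeq]
  haveI := hFm (f ≫ m)
  exact (cancel_mono (F.map (f ≫ m))).mp h2


section Closure
variable {C : Type u} [Category.{v} C]

lemma isFG_coprod [HasColimits C] {A B : C} (hA : IsFG A) (hB : IsFG B) :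
    IsFG (A ⨿ B) := by
  intro J _ _ F hFm c hc
  obtain ⟨hcA⟩ := hA J F hFm c hc
  obtain ⟨hcB⟩ := hB J F hFm c hc
  refine ⟨Types.FilteredColimit.isColimitOf _ _ ?_ ?_⟩
  · intro x
    obtain ⟨j₁, t₁, h₁⟩ := hom_factor hcA (coprod.inl ≫ x)
    obtain ⟨j₂, t₂, h₂⟩ := hom_factor hcB (coprod.inr ≫ x)
    refine ⟨IsFiltered.max j₁ j₂,
      coprod.desc (t₁ ≫ F.map (IsFiltered.leftToMax j₁ j₂))
        (t₂ ≫ F.map (IsFiltered.rightToMax j₁ j₂)), ?_⟩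
    show x = coprod.desc _ _ ≫ c.ι.app _
    apply coprod.hom_ext
    · rw [coprod.inl_desc_assoc, Category.assoc, c.w, h₁]
    · rw [coprod.inr_desc_assoc, Category.assoc, c.w, h₂]
  · intro i j x y hxy
    have hxy' : (x : A ⨿ B ⟶ F.obj i) ≫ c.ι.app i = y ≫ c.ι.app j := hxy
    have hA1 : (coprod.inl ≫ x) ≫ c.ι.app i = (coprod.inl ≫ y) ≫ c.ι.app j := by
      rw [Category.assoc, Category.assoc, hxy']
    have hB1 : (coprod.inr ≫ x) ≫ c.ι.app i = (coprod.inr ≫ y) ≫ c.ι.app j := by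
      rw [Category.assoc, Category.assoc, hxy']
    obtain ⟨l₁, f₁, g₁, hfa⟩ := hom_eventually_eq hcA hA1
    obtain ⟨l₂, f₂, g₂, hfb⟩ := hom_eventually_eq hcB hB1
    let p := IsFiltered.leftToMax l₁ l₂
    let q := IsFiltered.rightToMax l₁ l₂
    let w := IsFiltered.coeqHom (f₁ ≫ p) (f₂ ≫ q)
    have hw : (f₁ ≫ p) ≫ w = (f₂ ≫ q) ≫ w := IsFiltered.coeq_condition _ _
    let w' := IsFiltered.coeqHom (g₁ ≫ p ≫ w) (g₂ ≫ q ≫ w)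
    have hw' : (g₁ ≫ p ≫ w) ≫ w' = (g₂ ≫ q ≫ w) ≫ w' := IsFiltered.coeq_condition _ _
    refine ⟨_, f₁ ≫ p ≫ w ≫ w', g₁ ≫ p ≫ w ≫ w', ?_⟩
    show x ≫ F.map (f₁ ≫ p ≫ w ≫ w') = y ≫ F.map (g₁ ≫ p ≫ w ≫ w')
    have e1 : f₁ ≫ p ≫ w ≫ w' = f₂ ≫ q ≫ w ≫ w' := by
      simp only [← Category.assoc]; rw [hw]
    have e2 : g₁ ≫ p ≫ w ≫ w' = g₂ ≫ q ≫ w ≫ w' := by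
      simp only [← Category.assoc] at hw' ⊢; exact hw'
    have H1 : (coprod.inl ≫ x) ≫ F.map (f₁ ≫ p ≫ w ≫ w')
        = (coprod.inl ≫ y) ≫ F.map (g₁ ≫ p ≫ w ≫ w') := by
      calc (coprod.inl ≫ x) ≫ F.map (f₁ ≫ p ≫ w ≫ w')
          = ((coprod.inl ≫ x) ≫ F.map f₁) ≫ F.map (p ≫ w ≫ w') := by
            simp [Functor.map_comp]
        _ = ((coprod.inl ≫ y) ≫ F.map g₁) ≫ F.map (p ≫ w ≫ w') := by rw [hfa]
        _ = (coprod.inl ≫ y) ≫ F.map (g₁ ≫ p ≫ w ≫ w') := by simp [Functor.map_comp]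
    have H2 : (coprod.inr ≫ x) ≫ F.map (f₁ ≫ p ≫ w ≫ w')
        = (coprod.inr ≫ y) ≫ F.map (g₁ ≫ p ≫ w ≫ w') := by
      calc (coprod.inr ≫ x) ≫ F.map (f₁ ≫ p ≫ w ≫ w')
          = ((coprod.inr ≫ x) ≫ F.map f₂) ≫ F.map (q ≫ w ≫ w') := by
            rw [e1]; simp [Functor.map_comp]
        _ = ((coprod.inr ≫ y) ≫ F.map g₂) ≫ F.map (q ≫ w ≫ w') := by rw [hfb]
        _ = (coprod.inr ≫ y) ≫ F.map (g₁ ≫ p ≫ w ≫ w') := by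
            rw [e2]; simp [Functor.map_comp]
    apply coprod.hom_ext
    · simpa [Category.assoc] using H1
    · simpa [Category.assoc] using H2

lemma isFG_of_epi (hpres : HasPres C) {X Y : C} (e : X ⟶ Y) (he : Epi e)
    (hlift : ∀ {A B : C} (i : A ⟶ B), Mono i → ∀ (t : X ⟶ A) (g : Y ⟶ B),
      e ≫ g = t ≫ i → ∃ d : Y ⟶ A, d ≫ i = g)
    (hX : IsFG X) : IsFG Y := by
  intro J _ _ F hFm c hc
  obtain ⟨hc⟩ := hc
  obtain ⟨hmX⟩ := hX J F hFm c ⟨hc⟩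
  refine ⟨Types.FilteredColimit.isColimitOf _ _ ?_ ?_⟩
  · intro g
    obtain ⟨j, t, ht⟩ := hom_factor hmX (e ≫ (g : Y ⟶ c.pt))
    haveI : Mono (c.ι.app j) := mono_ι_of_filtered_monos hpres hFm hc j
    obtain ⟨d, hd⟩ := hlift (c.ι.app j) this t g ht.symm
    exact ⟨j, d, hd.symm⟩
  · intro i j x y hxy
    have hxy' : (x : Y ⟶ F.obj i) ≫ c.ι.app i = y ≫ c.ι.app j := hxy
    have : (e ≫ x) ≫ c.ι.app i = (e ≫ y) ≫ c.ι.app j := by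
      rw [Category.assoc, Category.assoc, hxy']
    obtain ⟨l, f, g, hfg⟩ := hom_eventually_eq hmX this
    refine ⟨l, f, g, ?_⟩
    show x ≫ F.map f = y ≫ F.map g
    apply (cancel_epi e).mp
    simpa [Category.assoc] using hfg

end Closure


section ChainSec

/-- the `v`-small copy of ℕ used as index category -/
structure NatV : Type v where
  down : ℕ

instance : Preorder (NatV.{v}) := Preorder.lift NatV.down

instance : IsFiltered (NatV.{v}) where
  nonempty := ⟨⟨0⟩⟩
  cocone_objs j k := ⟨⟨max j.down k.down⟩,
    homOfLE (show j.down ≤ max j.down k.down from le_max_left _ _),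
    homOfLE (show k.down ≤ max j.down k.down from le_max_right _ _), trivial⟩
  cocone_maps j k f g := ⟨k, 𝟙 k, by
    apply Subsingleton.elim⟩

variable {C : Type u} [Category.{v} C] [HasColimits C]

/-- a stage of the chain: an object with a map to the fixed target -/
structure Stg (C : Type u) [Category.{v} C] (TV : C) : Type (max u v) where
  E : C
  m : E ⟶ TV

variable {σ : Type v} (fam : σ → C) {TV : C}

/-- index of all fp-pairs identified in `TV` -/
def nxtIdx (p : Stg C TV) : Type v :=
  Σ s : σ, { xy : (fam s ⟶ p.E) × (fam s ⟶ p.E) // xy.1 ≫ p.m = xy.2 ≫ p.m }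

noncomputable def nxtX (p : Stg C TV) : (∐ fun i : nxtIdx fam p => fam i.1) ⟶ p.E :=
  Sigma.desc fun i => i.2.1.1

noncomputable def nxtY (p : Stg C TV) : (∐ fun i : nxtIdx fam p => fam i.1) ⟶ p.E :=
  Sigma.desc fun i => i.2.1.2

lemma nxt_w (p : Stg C TV) : nxtX fam p ≫ p.m = nxtY fam p ≫ p.m := by
  apply Sigma.hom_ext
  intro i
  simp [nxtX, nxtY, i.2.2]

@[reducible] noncomputable def nxt (p : Stg C TV) : Stg C TV :=
  ⟨coequalizer (nxtX fam p) (nxtY fam p), coequalizer.desc p.m (nxt_w fam p)⟩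

noncomputable def stepπ (p : Stg C TV) : p.E ⟶ (nxt fam p).E :=
  coequalizer.π _ _

lemma stepπ_m (p : Stg C TV) : stepπ fam p ≫ (nxt fam p).m = p.m :=
  coequalizer.π_desc _ _

instance stepπ_epi (p : Stg C TV) : Epi (stepπ fam p) := by
  unfold stepπ; infer_instance

lemma stepπ_merges (p : Stg C TV) (i : nxtIdx fam p) :
    i.2.1.1 ≫ stepπ fam p = i.2.1.2 ≫ stepπ fam p := by
  have h := coequalizer.condition (nxtX fam p) (nxtY fam p)
  have h2 := Sigma.ι (fun i : nxtIdx fam p => fam i.1) i ≫= h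
  simpa [nxtX, nxtY, stepπ] using h2

lemma stepπ_desc (p : Stg C TV) {A : C} (u : p.E ⟶ A)
    (hu : ∀ i : nxtIdx fam p, i.2.1.1 ≫ u = i.2.1.2 ≫ u) :
    ∃ d : (nxt fam p).E ⟶ A, stepπ fam p ≫ d = u := by
  refine ⟨coequalizer.desc u ?_, coequalizer.π_desc _ _⟩
  apply Sigma.hom_ext
  intro i
  simp [nxtX, nxtY, hu i]

@[reducible] noncomputable def chain (V₀ : C) (m₀ : V₀ ⟶ TV) : ℕ → Stg C TV
  | 0 => ⟨V₀, m₀⟩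
  | n + 1 => nxt fam (chain V₀ m₀ n)

variable (V₀ : C) (m₀ : V₀ ⟶ TV)

noncomputable def chainF : ℕ ⥤ C :=
  Functor.ofSequence (fun n => stepπ fam (chain fam V₀ m₀ n))

noncomputable def toNat : NatV.{v} ⥤ ℕ :=
  Monotone.functor (f := NatV.down) (fun _ _ h => h)

noncomputable def chainU : NatV.{v} ⥤ C := toNat ⋙ chainF fam V₀ m₀

lemma chainU_obj (n : ℕ) : (chainU fam V₀ m₀).obj ⟨n⟩ = (chain fam V₀ m₀ n).E := rfl

lemma chainU_map_succ {n : ℕ} (f : (⟨n⟩ : NatV.{v}) ⟶ ⟨n + 1⟩) :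
    (chainU fam V₀ m₀).map f = stepπ fam (chain fam V₀ m₀ n) := by
  have h1 : (toNat.{v}).map f = homOfLE (Nat.le_add_right n 1) := Subsingleton.elim _ _
  show (chainF fam V₀ m₀).map ((toNat).map f) = _
  rw [h1]
  exact Functor.ofSequence_map_homOfLE_succ _ n

noncomputable def Eω : C := colimit (chainU fam V₀ m₀)

noncomputable def ιω (n : ℕ) : (chain fam V₀ m₀ n).E ⟶ Eω fam V₀ m₀ :=
  colimit.ι (chainU fam V₀ m₀) ⟨n⟩

lemma ιω_succ (n : ℕ) :
    stepπ fam (chain fam V₀ m₀ n) ≫ ιω fam V₀ m₀ (n + 1) = ιω fam V₀ m₀ n := by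
  have := colimit.w (chainU fam V₀ m₀) (homOfLE (show ((⟨n⟩ : NatV.{v}).down ≤ n + 1) from
    Nat.le_add_right n 1) : (⟨n⟩ : NatV.{v}) ⟶ ⟨n + 1⟩)
  rw [chainU_map_succ] at this
  exact this

lemma chainF_map_succ (n : ℕ) (h : n ≤ n + 1) :
    (chainF fam V₀ m₀).map (homOfLE h) = stepπ fam (chain fam V₀ m₀ n) := by
  rw [Subsingleton.elim (homOfLE h) (homOfLE (Nat.le_add_right n 1))]
  exact Functor.ofSequence_map_homOfLE_succ _ n

lemma chainF_compat {A : C} (u : ∀ n, (chain fam V₀ m₀ n).E ⟶ A)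
    (hu : ∀ n, stepπ fam (chain fam V₀ m₀ n) ≫ u (n + 1) = u n)
    {m n : ℕ} (h : m ≤ n) : (chainF fam V₀ m₀).map (homOfLE h) ≫ u n = u m := by
  induction n, h using Nat.le_induction with
  | base =>
    rw [Subsingleton.elim (homOfLE _ : (m : ℕ) ⟶ m) (𝟙 m), CategoryTheory.Functor.map_id]
    exact Category.id_comp _
  | succ n hmn ih =>
    rw [Subsingleton.elim (homOfLE _ : (m : ℕ) ⟶ n + 1)
      (homOfLE hmn ≫ homOfLE (Nat.le_add_right n 1))]
    rw [Functor.map_comp]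
    erw [Category.assoc, chainF_map_succ, hu n, ih]

lemma chain_desc {A : C} (u : ∀ n, (chain fam V₀ m₀ n).E ⟶ A)
    (hu : ∀ n, stepπ fam (chain fam V₀ m₀ n) ≫ u (n + 1) = u n) :
    ∃ d : Eω fam V₀ m₀ ⟶ A, ∀ n, ιω fam V₀ m₀ n ≫ d = u n := by
  have hnat : ∀ (j k : NatV.{v}) (f : j ⟶ k),
      (chainU fam V₀ m₀).map f ≫ u k.down = u j.down := by
    intro j k f
    have h2 : (toNat.{v}).map f = homOfLE (leOfHom ((toNat).map f)) := Subsingleton.elim _ _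
    show (chainF fam V₀ m₀).map ((toNat).map f) ≫ u k.down = u j.down
    rw [h2]
    exact chainF_compat fam V₀ m₀ u hu _
  let coc : Cocone (chainU fam V₀ m₀) :=
    ⟨A, ⟨fun j => u j.down, by intro j k f; exact (hnat j k f).trans (Category.comp_id _).symm⟩⟩
  exact ⟨colimit.desc _ coc, fun n => colimit.ι_desc coc ⟨n⟩⟩

lemma ιω_epi_zero {A : C} (φ ψ : Eω fam V₀ m₀ ⟶ A)
    (h : ιω fam V₀ m₀ 0 ≫ φ = ιω fam V₀ m₀ 0 ≫ ψ) : φ = ψ := by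
  have key : ∀ n, ιω fam V₀ m₀ n ≫ φ = ιω fam V₀ m₀ n ≫ ψ := by
    intro n
    induction n with
    | zero => exact h
    | succ n ih =>
      have h1 := ιω_succ fam V₀ m₀ n
      apply (cancel_epi (stepπ fam (chain fam V₀ m₀ n))).mp
      rw [← Category.assoc, ← Category.assoc, h1, ih]
  apply colimit.hom_ext
  intro j
  obtain ⟨n⟩ := j
  exact key n

end ChainSec


section ChainMain
variable {C : Type u} [Category.{v} C] [HasColimits C]
variable {σ : Type v} (fam : σ → C) {TV : C} (V₀ : C) (m₀ : V₀ ⟶ TV)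

lemma chain_succ_m (n : ℕ) :
    stepπ fam (chain fam V₀ m₀ n) ≫ (chain fam V₀ m₀ (n + 1)).m = (chain fam V₀ m₀ n).m :=
  stepπ_m fam (chain fam V₀ m₀ n)

lemma mono_mω (hpres : HasPres C) (hfam : ∀ s, IsFP (fam s))
    (hcover : ∀ X : C, IsFP X → ∃ s, Nonempty (fam s ≅ X))
    (mω : Eω fam V₀ m₀ ⟶ TV)
    (hmω : ∀ n, ιω fam V₀ m₀ n ≫ mω = (chain fam V₀ m₀ n).m) : Mono mω := by
  constructor
  intro Z α β hab
  apply eq_from_fp_elements hpres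
  intro Z' hZ' z
  obtain ⟨hmap⟩ := hZ' NatV (chainU fam V₀ m₀) (colimit.cocone _) ⟨colimit.isColimit _⟩
  obtain ⟨⟨n₁⟩, a₁, ha₁⟩ := hom_factor hmap (z ≫ α)
  obtain ⟨⟨n₂⟩, a₂, ha₂⟩ := hom_factor hmap (z ≫ β)
  let n := max n₁ n₂
  let f₁ : (⟨n₁⟩ : NatV.{v}) ⟶ ⟨n⟩ := homOfLE (show n₁ ≤ max n₁ n₂ from le_max_left _ _)
  let f₂ : (⟨n₂⟩ : NatV.{v}) ⟶ ⟨n⟩ := homOfLE (show n₂ ≤ max n₁ n₂ from le_max_right _ _)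
  let a₁' : Z' ⟶ (chain fam V₀ m₀ n).E := a₁ ≫ (chainU fam V₀ m₀).map f₁
  let a₂' : Z' ⟶ (chain fam V₀ m₀ n).E := a₂ ≫ (chainU fam V₀ m₀).map f₂
  have ha₁' : a₁' ≫ ιω fam V₀ m₀ n = z ≫ α := by
    show a₁' ≫ colimit.ι (chainU fam V₀ m₀) ⟨n⟩ = z ≫ α
    show (a₁ ≫ (chainU fam V₀ m₀).map f₁) ≫ colimit.ι (chainU fam V₀ m₀) ⟨n⟩ = z ≫ α
    rw [Category.assoc, colimit.w]
    exact ha₁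
  have ha₂' : a₂' ≫ ιω fam V₀ m₀ n = z ≫ β := by
    show a₂' ≫ colimit.ι (chainU fam V₀ m₀) ⟨n⟩ = z ≫ β
    show (a₂ ≫ (chainU fam V₀ m₀).map f₂) ≫ colimit.ι (chainU fam V₀ m₀) ⟨n⟩ = z ≫ β
    rw [Category.assoc, colimit.w]
    exact ha₂
  have key : a₁' ≫ (chain fam V₀ m₀ n).m = a₂' ≫ (chain fam V₀ m₀ n).m := by
    rw [← hmω n, ← Category.assoc, ← Category.assoc, ha₁', ha₂', Category.assoc, Category.assoc,
      hab]
  obtain ⟨s, ⟨ψ⟩⟩ := hcover Z' hZ'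
  let i : nxtIdx fam (chain fam V₀ m₀ n) :=
    ⟨s, ⟨ψ.hom ≫ a₁', ψ.hom ≫ a₂'⟩, by
      have h3 := ψ.hom ≫= key
      simpa [Category.assoc] using h3⟩
  have hme := stepπ_merges fam (chain fam V₀ m₀ n) i
  have h2 : a₁' ≫ stepπ fam (chain fam V₀ m₀ n) = a₂' ≫ stepπ fam (chain fam V₀ m₀ n) := by
    apply (cancel_epi ψ.hom).mp
    simpa [i, Category.assoc] using hme
  calc z ≫ α = a₁' ≫ ιω fam V₀ m₀ n := ha₁'.symm
    _ = a₁' ≫ stepπ fam (chain fam V₀ m₀ n) ≫ ιω fam V₀ m₀ (n + 1) := by rw [ιω_succ]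
    _ = (a₁' ≫ stepπ fam (chain fam V₀ m₀ n)) ≫ ιω fam V₀ m₀ (n + 1) :=
        (Category.assoc _ _ _).symm
    _ = (a₂' ≫ stepπ fam (chain fam V₀ m₀ n)) ≫ ιω fam V₀ m₀ (n + 1) := by rw [h2]
    _ = a₂' ≫ ιω fam V₀ m₀ n := by rw [Category.assoc, ιω_succ]
    _ = z ≫ β := ha₂'

lemma ιω_zero_lift {A B : C} (i : A ⟶ B) (hi : Mono i) (t : V₀ ⟶ A)
    (g : Eω fam V₀ m₀ ⟶ B) (hsq : ιω fam V₀ m₀ 0 ≫ g = t ≫ i) :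
    ∃ d : Eω fam V₀ m₀ ⟶ A, d ≫ i = g := by
  have hex : ∀ n, ∃ un : (chain fam V₀ m₀ n).E ⟶ A, un ≫ i = ιω fam V₀ m₀ n ≫ g := by
    intro n
    induction n with
    | zero => exact ⟨t, hsq.symm⟩
    | succ n ih =>
      obtain ⟨un, hun⟩ := ih
      obtain ⟨d, hd⟩ := stepπ_desc fam (chain fam V₀ m₀ n) un (by
        intro idx
        apply (cancel_mono i).mp
        rw [Category.assoc, Category.assoc, hun, ← Category.assoc, ← Category.assoc,
          ← ιω_succ fam V₀ m₀ n, ← Category.assoc, ← Category.assoc,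
          stepπ_merges fam (chain fam V₀ m₀ n) idx])
      refine ⟨d, ?_⟩
      apply (cancel_epi (stepπ fam (chain fam V₀ m₀ n))).mp
      rw [← Category.assoc, hd, hun, ← Category.assoc, ιω_succ]
  choose U hU using hex
  have compat : ∀ n, stepπ fam (chain fam V₀ m₀ n) ≫ U (n + 1) = U n := by
    intro n
    apply (cancel_mono i).mp
    rw [Category.assoc, hU, hU, ← Category.assoc, ιω_succ]
  obtain ⟨d, hd⟩ := chain_desc fam V₀ m₀ U compat
  refine ⟨d, ?_⟩
  apply colimit.hom_ext
  rintro ⟨n⟩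
  have : colimit.ι (chainU fam V₀ m₀) ⟨n⟩ = ιω fam V₀ m₀ n := rfl
  rw [this]
  calc ιω fam V₀ m₀ n ≫ d ≫ i = (ιω fam V₀ m₀ n ≫ d) ≫ i := (Category.assoc _ _ _).symm
    _ = ιω fam V₀ m₀ n ≫ g := by rw [hd, hU]

lemma isFG_Eω (hpres : HasPres C) (hV₀ : IsFG V₀) : IsFG (Eω fam V₀ m₀) := by
  apply isFG_of_epi hpres (ιω fam V₀ m₀ 0) ⟨fun φ ψ h => ιω_epi_zero fam V₀ m₀ φ ψ h⟩
    ?_ hV₀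
  intro A B i hi t g hsq
  exact ιω_zero_lift fam V₀ m₀ i hi t g hsq

lemma exists_str (Hfun : C ⥤ C) (Tstr : TV ⟶ Hfun.obj TV) (str₀ : V₀ ⟶ Hfun.obj V₀)
    (h₀ : str₀ ≫ Hfun.map m₀ = m₀ ≫ Tstr)
    (mω : Eω fam V₀ m₀ ⟶ TV)
    (hmω : ∀ n, ιω fam V₀ m₀ n ≫ mω = (chain fam V₀ m₀ n).m)
    (Hmono : Mono (Hfun.map mω)) :
    ∃ sω : Eω fam V₀ m₀ ⟶ Hfun.obj (Eω fam V₀ m₀),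
      ιω fam V₀ m₀ 0 ≫ sω = str₀ ≫ Hfun.map (ιω fam V₀ m₀ 0) ∧
      sω ≫ Hfun.map mω = mω ≫ Tstr := by
  have hex : ∀ n, ∃ sn : (chain fam V₀ m₀ n).E ⟶ Hfun.obj (Eω fam V₀ m₀),
      sn ≫ Hfun.map mω = (chain fam V₀ m₀ n).m ≫ Tstr := by
    intro n
    induction n with
    | zero =>
      refine ⟨str₀ ≫ Hfun.map (ιω fam V₀ m₀ 0), ?_⟩
      rw [Category.assoc, ← Hfun.map_comp, hmω 0]
      show str₀ ≫ Hfun.map m₀ = m₀ ≫ Tstr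
      exact h₀
    | succ n ih =>
      obtain ⟨sn, hsn⟩ := ih
      obtain ⟨d, hd⟩ := stepπ_desc fam (chain fam V₀ m₀ n) sn (by
        intro idx
        apply (cancel_mono (Hfun.map mω)).mp
        rw [Category.assoc, Category.assoc, hsn, ← Category.assoc, ← Category.assoc, idx.2.2])
      refine ⟨d, ?_⟩
      apply (cancel_epi (stepπ fam (chain fam V₀ m₀ n))).mp
      rw [← Category.assoc, hd, hsn, ← Category.assoc, chain_succ_m]
  choose S hS using hex
  have compat : ∀ n, stepπ fam (chain fam V₀ m₀ n) ≫ S (n + 1) = S n := by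
    intro n
    apply (cancel_mono (Hfun.map mω)).mp
    rw [Category.assoc, hS, hS, ← Category.assoc, chain_succ_m]
  obtain ⟨sω, hsω⟩ := chain_desc fam V₀ m₀ S compat
  have hS0 : S 0 = str₀ ≫ Hfun.map (ιω fam V₀ m₀ 0) := by
    apply (cancel_mono (Hfun.map mω)).mp
    rw [hS, Category.assoc, ← Hfun.map_comp, hmω 0]
    show (chain fam V₀ m₀ 0).m ≫ Tstr = str₀ ≫ Hfun.map m₀
    exact h₀.symm
  refine ⟨sω, by rw [hsω 0, hS0], ?_⟩
  apply ιω_epi_zero fam V₀ m₀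
  rw [← Category.assoc, hsω 0, hS0, Category.assoc, ← Hfun.map_comp, hmω 0, ← Category.assoc,
    hmω 0]
  show str₀ ≫ Hfun.map m₀ = (chain fam V₀ m₀ 0).m ≫ Tstr
  exact h₀

end ChainMain


section Main
variable {C : Type u} [Category.{v} C]

lemma strictInitial_of_iso {X Y : C} (e : X ≅ Y) (h : IsStrictInitial Y) :
    IsStrictInitial X := by
  refine ⟨⟨h.1.some.ofIso e.symm⟩, fun Z f => ?_⟩
  haveI : IsIso (f ≫ e.hom) := h.2 _ _
  have hf : f = (f ≫ e.hom) ≫ e.inv := by simp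
  rw [hf]
  infer_instance

end Main


section Final
variable {C : Type u} [Category.{v} C]

theorem main_stmt (hC : HasColimits C)
    (hess : EssentiallySmall.{v} (ObjectProperty.FullSubcategory (fun X : C => IsFP X)))
    (hpres : HasPres C)
    (H : C ⥤ C)
    (hm : ∀ ⦃X Y : C⦄ (m : X ⟶ Y), Mono m → ¬ IsStrictInitial X → Mono (H.map m))
    (L : Endofunctor.Coalgebra H) (hLlfg : IsLFGCoalgebra H L)
    (hLfinal : ∀ X : Endofunctor.Coalgebra H, IsLFGCoalgebra H X → ∃! _ : X ⟶ L, True)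
    (T : Endofunctor.Coalgebra H) (hT : IsTerminal T) :
    Mono (hT.from L).f := by
  haveI := hC
  haveI := hess
  set σ := SmallModel (ObjectProperty.FullSubcategory (fun X : C => IsFP X)) with hσ
  let eqv := equivSmallModel (ObjectProperty.FullSubcategory (fun X : C => IsFP X))
  let fam : σ → C := fun s => (eqv.inverse.obj s).obj
  have hfam : ∀ s, IsFP (fam s) := fun s => (eqv.inverse.obj s).property
  have hcover : ∀ X : C, IsFP X → ∃ s, Nonempty (fam s ≅ X) := by
    intro X hX
    refine ⟨eqv.functor.obj ⟨X, hX⟩, ⟨?_⟩⟩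
    exact (ObjectProperty.ι _).mapIso (eqv.unitIso.app ⟨X, hX⟩).symm
  set m := hT.from L with hmdef
  constructor
  intro Z uu vv huv
  apply eq_from_fp_elements hpres
  intro S hSfp z
  by_cases hstrict : IsStrictInitial S
  · exact hstrict.1.some.hom_ext _ _
  have hSfg := fpToFG hSfp
  have huv' : (z ≫ uu) ≫ m.f = (z ≫ vv) ≫ m.f := by
    rw [Category.assoc, Category.assoc, huv]
  obtain ⟨P, h, u', hPfg, hu'⟩ := hLlfg S hSfg (z ≫ uu)
  obtain ⟨Q, k, v', hQfg, hv'⟩ := hLlfg S hSfg (z ≫ vv)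
  -- the coproduct coalgebra
  let RV : C := P.V ⨿ Q.V
  let Rstr : RV ⟶ H.obj RV :=
    coprod.desc (P.str ≫ H.map coprod.inl) (Q.str ≫ H.map coprod.inr)
  let R : Endofunctor.Coalgebra H := ⟨RV, Rstr⟩
  have hRVfg : IsFG RV := isFG_coprod hPfg hQfg
  have hkh0 : coprod.desc (P.str ≫ H.map coprod.inl) (Q.str ≫ H.map coprod.inr)
      ≫ H.map (coprod.desc h.f k.f) = coprod.desc h.f k.f ≫ L.str := by
    apply coprod.hom_ext
    · calc coprod.inl ≫ coprod.desc (P.str ≫ H.map coprod.inl) (Q.str ≫ H.map coprod.inr)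
            ≫ H.map (coprod.desc h.f k.f)
          = (P.str ≫ H.map coprod.inl) ≫ H.map (coprod.desc h.f k.f) := by
            rw [coprod.inl_desc_assoc]
        _ = P.str ≫ H.map h.f := by rw [Category.assoc, ← H.map_comp, coprod.inl_desc]
        _ = h.f ≫ L.str := h.h
        _ = coprod.inl ≫ coprod.desc h.f k.f ≫ L.str := by rw [coprod.inl_desc_assoc]
    · calc coprod.inr ≫ coprod.desc (P.str ≫ H.map coprod.inl) (Q.str ≫ H.map coprod.inr)
            ≫ H.map (coprod.desc h.f k.f)
          = (Q.str ≫ H.map coprod.inr) ≫ H.map (coprod.desc h.f k.f) := by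
            rw [coprod.inr_desc_assoc]
        _ = Q.str ≫ H.map k.f := by rw [Category.assoc, ← H.map_comp, coprod.inr_desc]
        _ = k.f ≫ L.str := k.h
        _ = coprod.inr ≫ coprod.desc h.f k.f ≫ L.str := by rw [coprod.inr_desc_assoc]
  have hkh : R.str ≫ H.map (coprod.desc h.f k.f) = coprod.desc h.f k.f ≫ L.str := hkh0
  let hk : R ⟶ L := ⟨coprod.desc h.f k.f, hkh⟩
  let w : R ⟶ T := hk ≫ m
  have hwf : w.f = coprod.desc h.f k.f ≫ m.f := rfl
  let a : S ⟶ RV := u' ≫ coprod.inl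
  let b : S ⟶ RV := v' ≫ coprod.inr
  have ha : a ≫ hk.f = z ≫ uu := by
    show (u' ≫ coprod.inl) ≫ coprod.desc h.f k.f = z ≫ uu
    rw [Category.assoc, coprod.inl_desc, hu']
  have hb : b ≫ hk.f = z ≫ vv := by
    show (v' ≫ coprod.inr) ≫ coprod.desc h.f k.f = z ≫ vv
    rw [Category.assoc, coprod.inr_desc, hv']
  -- the chain
  obtain ⟨mω, hmω⟩ := chain_desc fam RV w.f
    (fun n => (chain fam RV w.f n).m) (chain_succ_m fam RV w.f)
  have hMono : Mono mω := mono_mω fam RV w.f hpres hfam hcover mω hmω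
  have hnsE : ¬ IsStrictInitial (Eω fam RV w.f) := by
    intro hsE
    apply hstrict
    haveI : IsIso (a ≫ ιω fam RV w.f 0) := hsE.2 _ _
    exact strictInitial_of_iso (asIso (a ≫ ιω fam RV w.f 0)) hsE
  have HMono : Mono (H.map mω) := hm mω hMono hnsE
  obtain ⟨sω, hsω0, hsωm⟩ := exists_str fam RV w.f H T.str R.str w.h mω hmω HMono
  let Ec : Endofunctor.Coalgebra H := ⟨Eω fam RV w.f, sω⟩
  let rr : R ⟶ Ec := ⟨ιω fam RV w.f 0, hsω0.symm⟩
  have hEfg : IsFG (Eω fam RV w.f) := isFG_Eω fam RV w.f hpres hRVfg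
  have hElfg : IsLFGCoalgebra H Ec := by
    intro S' hS' f
    exact ⟨Ec, 𝟙 Ec, f, hEfg, by simp⟩
  have hRlfg : IsLFGCoalgebra H R := by
    intro S' hS' f
    exact ⟨R, 𝟙 R, f, hRVfg, by simp⟩
  obtain ⟨q, -, hq⟩ := hLfinal Ec hElfg
  obtain ⟨r0, -, hr⟩ := hLfinal R hRlfg
  have hcomp : rr ≫ q = hk := by rw [hr (rr ≫ q) trivial, hr hk trivial]
  have hgen : ∀ c : S ⟶ RV, (c ≫ ιω fam RV w.f 0) ≫ mω = c ≫ w.f := by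
    intro c
    rw [Category.assoc, hmω 0]
  have hain : (a ≫ ιω fam RV w.f 0) ≫ mω = (b ≫ ιω fam RV w.f 0) ≫ mω := by
    rw [hgen a, hgen b]
    have h1 : a ≫ w.f = (z ≫ uu) ≫ m.f := by
      rw [hwf, ← Category.assoc]
      show (a ≫ hk.f) ≫ m.f = _
      rw [ha]
    have h2 : b ≫ w.f = (z ≫ vv) ≫ m.f := by
      rw [hwf, ← Category.assoc]
      show (b ≫ hk.f) ≫ m.f = _
      rw [hb]
    rw [h1, h2, huv']
  have habι : a ≫ ιω fam RV w.f 0 = b ≫ ιω fam RV w.f 0 :=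
    (cancel_mono mω).mp hain
  calc z ≫ uu = a ≫ hk.f := ha.symm
    _ = a ≫ (rr ≫ q).f := by rw [hcomp]
    _ = (a ≫ ιω fam RV w.f 0) ≫ q.f := by
        rw [show (rr ≫ q).f = rr.f ≫ q.f from rfl, ← Category.assoc]
    _ = (b ≫ ιω fam RV w.f 0) ≫ q.f := by rw [habι]
    _ = b ≫ (rr ≫ q).f := by
        rw [show (rr ≫ q).f = rr.f ≫ q.f from rfl, ← Category.assoc]
    _ = b ≫ hk.f := by rw [hcomp]
    _ = z ≫ vv := hb

end Final

end LFFAux13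

open LFF in
/-- The final lfg coalgebra is a subcoalgebra of the final coalgebra: the unique
homomorphism from the final lfg coalgebra into the final coalgebra is monic. -/
theorem stmt13 {C : Type u} [Category.{v} C] (hC : IsLFP C)
    (H : C ⥤ C) (hfin : IsFinitary H) (hm : PreservesNonemptyMonos H)
    (L : Endofunctor.Coalgebra H) (hLlfg : IsLFGCoalgebra H L)
    (hLfinal : ∀ X : Endofunctor.Coalgebra H, IsLFGCoalgebra H X → ∃! _ : X ⟶ L, True)
    (T : Endofunctor.Coalgebra H) (hT : IsTerminal T) :
    Mono (hT.from L).f := by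
  exact LFFAux13.main_stmt hC.1 hC.2.1 hC.2.2 H
    (fun X Y mm hmono hns => hm mm hmono hns) L hLlfg hLfinal T hT
end

section
/- If (C, c) is an lfg coalgebra, then the coalgebra (HC, Hc) is also lfg. -/
open CategoryTheory CategoryTheory.Limits

universe v u

namespace Aux14

attribute [-instance] catToReflQuiver

open LFF

variable {C : Type u} [Category.{v} C]


/-- Build a cocone from legs. -/
@[simps]
def coconeOfLegs {J : Type v} [SmallCategory J] (F : J ⥤ C) {Y : C}
    (l : ∀ j, F.obj j ⟶ Y) (w : ∀ (j j' : J) (u : j ⟶ j'), F.map u ≫ l j' = l j) :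
    Cocone F where
  pt := Y
  ι := { app := l, naturality := fun _ _ u => by simp [w _ _ u] }

/-- A small filtered cocone over `Y` with fp objects which is a colimit. -/
structure Pres (Y : C) where
  J : Type v
  [cat : SmallCategory J]
  [filt : IsFiltered J]
  F : J ⥤ C
  l : ∀ j, F.obj j ⟶ Y
  w : ∀ (j j' : J) (u : j ⟶ j'), F.map u ≫ l j' = l j
  hfp : ∀ j, IsFP (F.obj j)
  hcolim : IsColimit (coconeOfLegs F l w)

attribute [instance] Pres.cat Pres.filt

noncomputable def pres (hC : IsLFP C) (Y : C) : Pres Y := by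
  choose J cat filt F c hfp hcolim hiso using hC.2.2
  have hc := (hcolim Y).some
  have e := (hiso Y).some
  refine @Pres.mk _ _ Y (J Y) (cat Y) (filt Y) (F Y)
    (fun j => (c Y).ι.app j ≫ e.hom)
    (fun j j' u => by rw [← Category.assoc, (c Y).w]) (hfp Y) ?_
  refine ⟨fun s => e.inv ≫ hc.desc s, fun s j => by erw [Category.assoc, Iso.hom_inv_id_assoc]; exact hc.fac s j, fun s m hm => ?_⟩
  have h2 : e.hom ≫ m = hc.desc s := hc.uniq s (e.hom ≫ m) (fun j => by
    erw [← Category.assoc]; exact hm j)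
  show m = e.inv ≫ hc.desc s
  rw [← h2]; exact (Iso.inv_hom_id_assoc e m).symm

@[simp] lemma Pres.fac {Y : C} (P : Pres Y) {W : C} (s : Cocone P.F) (j : P.J) :
    P.l j ≫ P.hcolim.desc s = s.ι.app j := P.hcolim.fac s j

/-- every map from an fp object into the point of a filtered colimit factors
through a leg. -/
lemma fp_factors {R : C} (hR : IsFP R) {J : Type v} [SmallCategory J] [IsFiltered J]
    (F : J ⥤ C) (c : Cocone F) (hc : IsColimit c) (q : R ⟶ c.pt) :
    ∃ (j : J) (t : R ⟶ F.obj j), t ≫ c.ι.app j = q := by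
  obtain ⟨hmc⟩ := hR J F c ⟨hc⟩
  obtain ⟨j, y, hy⟩ := Types.jointly_surjective (F ⋙ coyoneda.obj (Opposite.op R)) hmc q
  exact ⟨j, y, hy⟩

/-- maps from an fp object equalized at the colimit are equalized at some stage. -/
lemma fp_eq_at_stage {R : C} (hR : IsFP R) {J : Type v} [SmallCategory J] [IsFiltered J]
    (F : J ⥤ C) (c : Cocone F) (hc : IsColimit c) {j k : J}
    (x : R ⟶ F.obj j) (y : R ⟶ F.obj k) (h : x ≫ c.ι.app j = y ≫ c.ι.app k) :
    ∃ (l : J) (u : j ⟶ l) (v : k ⟶ l), x ≫ F.map u = y ≫ F.map v := by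
  obtain ⟨hmc⟩ := hR J F c ⟨hc⟩
  have := (Types.FilteredColimit.isColimit_eq_iff
    (F ⋙ coyoneda.obj (Opposite.op R)) hmc (i := j) (j := k) (xi := x) (xj := y)).mp h
  obtain ⟨l, u, v, huv⟩ := this
  exact ⟨l, u, v, huv⟩

/-- the fp objects jointly reflect equality of parallel morphisms. -/
lemma fp_reflect (hC : IsLFP C) {Y Z : C} (a b : Y ⟶ Z)
    (h : ∀ (R : C), IsFP R → ∀ y : R ⟶ Y, y ≫ a = y ≫ b) : a = b := by
  have P := pres hC Y
  exact P.hcolim.hom_ext (fun j => by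
    exact h (P.F.obj j) (P.hfp j) (P.l j))

/-- In a filtered colimit over a diagram of monomorphisms, the colimit legs are monic. -/
lemma legs_mono (hC : IsLFP C) {J : Type v} [SmallCategory J] [IsFiltered J]
    (F : J ⥤ C) (hmono : ∀ ⦃i j : J⦄ (f : i ⟶ j), Mono (F.map f))
    (c : Cocone F) (hc : IsColimit c) (j : J) : Mono (c.ι.app j) := by
  constructor
  intro Y a b hab
  refine fp_reflect hC a b (fun R hR y => ?_)
  have : (y ≫ a) ≫ c.ι.app j = (y ≫ b) ≫ c.ι.app j := by
    rw [Category.assoc, Category.assoc, hab]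
  obtain ⟨l, u, v, huv⟩ := fp_eq_at_stage hR F c hc (y ≫ a) (y ≫ b) this
  have h2 : (y ≫ a) ≫ F.map (u ≫ IsFiltered.coeqHom u v) =
      (y ≫ b) ≫ F.map (v ≫ IsFiltered.coeqHom u v) := by
    simp only [F.map_comp, ← Category.assoc, huv]
  rw [IsFiltered.coeq_condition u v] at h2
  exact (hmono (v ≫ IsFiltered.coeqHom u v)).right_cancellation _ _ h2

/-- With mono legs, finite generation reduces to a factorization property. -/
lemma isFG_of_factors (hC : IsLFP C) (W : C)
    (hfac : ∀ (J : Type v) [SmallCategory J] [IsFiltered J] (F : J ⥤ C),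
      (∀ ⦃i j : J⦄ (f : i ⟶ j), Mono (F.map f)) →
      ∀ (c : Cocone F), IsColimit c → ∀ q : W ⟶ c.pt,
        ∃ (j : J) (t : W ⟶ F.obj j), t ≫ c.ι.app j = q) :
    IsFG W := by
  intro J _ _ F hmono c ⟨hc⟩
  refine ⟨Types.FilteredColimit.isColimitOf _ _ ?_ ?_⟩
  · intro x
    obtain ⟨j, t, ht⟩ := hfac J F hmono c hc x
    exact ⟨j, t, ht.symm⟩
  · intro i j xi xj hij
    refine ⟨IsFiltered.max i j, IsFiltered.leftToMax i j, IsFiltered.rightToMax i j, ?_⟩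
    have hmleg := legs_mono hC F hmono c hc (IsFiltered.max i j)
    show xi ≫ F.map _ = xj ≫ F.map _
    refine hmleg.right_cancellation _ _ ?_
    rw [Category.assoc, Category.assoc, c.w, c.w]
    exact hij

lemma isFG_of_isFP {W : C} (h : IsFP W) : IsFG W := by
  intro J _ _ F _ c hc
  exact h J F c hc

lemma isFG_of_isInitial (hC : IsLFP C) {W : C} (h : IsInitial W) : IsFG W := by
  refine isFG_of_factors hC W ?_
  intro J _ _ F hmono c hc q
  have j := (IsFiltered.nonempty (C := J)).some
  exact ⟨j, h.to _, h.hom_ext _ _⟩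

lemma isFG_coprod (hC : IsLFP C) [HasBinaryCoproducts C] {A B : C}
    (hA : IsFG A) (hB : IsFG B) : IsFG (A ⨿ B) := by
  refine isFG_of_factors hC _ ?_
  intro J _ _ F hmono c hc q
  obtain ⟨hcA⟩ := hA J F hmono c ⟨hc⟩
  obtain ⟨hcB⟩ := hB J F hmono c ⟨hc⟩
  obtain ⟨j₁, a, ha⟩ := Types.jointly_surjective _ hcA (coprod.inl ≫ q)
  obtain ⟨j₂, b, hb⟩ := Types.jointly_surjective _ hcB (coprod.inr ≫ q)
  refine ⟨IsFiltered.max j₁ j₂,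
    coprod.desc (a ≫ F.map (IsFiltered.leftToMax j₁ j₂))
      (b ≫ F.map (IsFiltered.rightToMax j₁ j₂)), ?_⟩
  apply coprod.hom_ext
  · rw [coprod.inl_desc_assoc, Category.assoc, c.w]
    exact ha
  · rw [coprod.inr_desc_assoc, Category.assoc, c.w]
    exact hb

/-- Strict initial objects are stable under isomorphism. -/
lemma isStrictInitial_of_iso {A B : C} (h : IsStrictInitial A) (e : A ≅ B) :
    IsStrictInitial B := by
  refine ⟨⟨h.1.some.ofIso e⟩, fun Y f => ?_⟩
  have : IsIso (f ≫ e.inv) := h.2 Y (f ≫ e.inv)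
  have : f = (f ≫ e.inv) ≫ e.hom := by simp
  rw [this]
  infer_instance

/-- Any morphism out of a strict initial object is a mono. -/
lemma mono_of_strictInitial {A B : C} (h : IsStrictInitial A) (f : A ⟶ B) : Mono f := by
  constructor
  intro Y a b _
  have ha : IsIso a := h.2 Y a
  have hinit : IsInitial Y := h.1.some.ofIso (asIso a).symm
  exact hinit.hom_ext a b

section OfSeq

variable {C : Type u} [Category.{v} C]

lemma ofSequence_comp_legs {X : ℕ → C} (f : ∀ n, X n ⟶ X (n + 1)) {W : C}
    (lg : ∀ n, X n ⟶ W) (hl : ∀ n, f n ≫ lg (n + 1) = lg n) (i j : ℕ) (h : i ≤ j) :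
    (Functor.ofSequence f).map (homOfLE h) ≫ lg j = lg i := by
  induction j, h using Nat.le_induction with
  | base =>
      erw [show (homOfLE (le_refl i) : i ⟶ i) = 𝟙 i from Subsingleton.elim _ _,
        CategoryTheory.Functor.map_id, Category.id_comp]
  | succ n hn ih =>
      erw [show (homOfLE (Nat.le_succ_of_le hn) : i ⟶ n + 1) =
          homOfLE hn ≫ homOfLE (Nat.le_succ n) from Subsingleton.elim _ _,
        CategoryTheory.Functor.map_comp, Category.assoc,
        Functor.ofSequence_map_homOfLE_succ, hl, ih]

end OfSeq

section Image

variable {C : Type u} [Category.{v} C] [HasColimits C]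
variable {A : Type v} [SmallCategory A] (G : A ⥤ C)

section Step

variable (E Z : C) (gE : E ⟶ Z)

/-- Index type of fp-indexed parallel pairs equalized over `Z`. -/
def PairIdx : Type v :=
  Σ a : A, { p : (G.obj a ⟶ E) × (G.obj a ⟶ E) // p.1 ≫ gE = p.2 ≫ gE }

noncomputable def pairDom : C := ∐ (fun i : PairIdx G E Z gE => G.obj i.1)

noncomputable def pairFst : pairDom G E Z gE ⟶ E := Sigma.desc (fun i => i.2.1.1)

noncomputable def pairSnd : pairDom G E Z gE ⟶ E := Sigma.desc (fun i => i.2.1.2)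

noncomputable def stepObj : C := coequalizer (pairFst G E Z gE) (pairSnd G E Z gE)

noncomputable def stepπ : E ⟶ stepObj G E Z gE := coequalizer.π _ _

noncomputable def stepg : stepObj G E Z gE ⟶ Z := by
  refine coequalizer.desc gE ?_
  refine Sigma.hom_ext _ _ (fun i => ?_)
  simp only [pairFst, pairSnd, colimit.ι_desc_assoc, Discrete.functor_obj_eq_as,
    Cofan.mk_pt, Cofan.mk_ι_app]
  erw [Sigma.ι_desc_assoc, Sigma.ι_desc_assoc]
  exact i.2.2

@[simp] lemma stepπ_stepg : stepπ G E Z gE ≫ stepg G E Z gE = gE :=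
  coequalizer.π_desc _ _

instance stepπ_epi : Epi (stepπ G E Z gE) := by
  unfold stepπ; exact coequalizer.π_epi (f := _) (g := _)

lemma step_kills {a : A} (x y : G.obj a ⟶ E) (hxy : x ≫ gE = y ≫ gE) :
    x ≫ stepπ G E Z gE = y ≫ stepπ G E Z gE := by
  have h1 : Sigma.ι (fun i : PairIdx G E Z gE => G.obj i.1) ⟨a, ⟨(x, y), hxy⟩⟩ ≫
      pairFst G E Z gE = x := by simp [pairFst]
  have h2 : Sigma.ι (fun i : PairIdx G E Z gE => G.obj i.1) ⟨a, ⟨(x, y), hxy⟩⟩ ≫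
      pairSnd G E Z gE = y := by simp [pairSnd]
  have hcnd : pairFst G E Z gE ≫ stepπ G E Z gE = pairSnd G E Z gE ≫ stepπ G E Z gE :=
    coequalizer.condition _ _
  have e1 : (Sigma.ι (fun i : PairIdx G E Z gE => G.obj i.1) ⟨a, ⟨(x, y), hxy⟩⟩ ≫
        pairFst G E Z gE) ≫ stepπ G E Z gE =
      (Sigma.ι (fun i : PairIdx G E Z gE => G.obj i.1) ⟨a, ⟨(x, y), hxy⟩⟩ ≫
        pairSnd G E Z gE) ≫ stepπ G E Z gE := by
    erw [Category.assoc, Category.assoc, hcnd]; rfl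
  rw [h1, h2] at e1
  exact e1

end Step

variable {T Z : C} (g : T ⟶ Z)

noncomputable def chainAux : ℕ → Σ' (E : C), E ⟶ Z := fun n =>
  Nat.rec ⟨T, g⟩ (fun _ p => ⟨stepObj G p.1 Z p.2, stepg G p.1 Z p.2⟩) n

noncomputable def chainE (n : ℕ) : C := (chainAux G g n).1

noncomputable def chainG (n : ℕ) : chainE G g n ⟶ Z := (chainAux G g n).2

noncomputable def chainStep (n : ℕ) : chainE G g n ⟶ chainE G g (n + 1) :=
  stepπ G (chainE G g n) Z (chainG G g n)

@[simp] lemma chainStep_chainG (n : ℕ) :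
    chainStep G g n ≫ chainG G g (n + 1) = chainG G g n :=
  stepπ_stepg G (chainE G g n) Z (chainG G g n)

instance chainStep_epi (n : ℕ) : Epi (chainStep G g n) := stepπ_epi _ _ _ _

lemma chain_kills (n : ℕ) {a : A} (x y : G.obj a ⟶ chainE G g n)
    (hxy : x ≫ chainG G g n = y ≫ chainG G g n) :
    x ≫ chainStep G g n = y ≫ chainStep G g n :=
  step_kills G _ Z _ x y hxy

/-- The chain as a functor from `AsSmall ℕ`. -/
noncomputable def chainF : AsSmall.{v} ℕ ⥤ C :=
  AsSmall.down ⋙ Functor.ofSequence (chainStep G g)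

@[simp] lemma chainF_obj (n : AsSmall.{v} ℕ) :
    (chainF G g).obj n = chainE G g (ULift.down n) := rfl

lemma chainF_map {n m : AsSmall.{v} ℕ} (h : n ⟶ m) :
    (chainF G g).map h = (Functor.ofSequence (chainStep G g)).map (ULift.down h) :=
  rfl

lemma chainF_comp_legs {W : C} (lg : ∀ n : ℕ, chainE G g n ⟶ W)
    (hl : ∀ n, chainStep G g n ≫ lg (n + 1) = lg n) {n m : AsSmall.{v} ℕ} (h : n ⟶ m) :
    (chainF G g).map h ≫ lg (ULift.down m) = lg (ULift.down n) := by
  rw [chainF_map]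
  exact ofSequence_comp_legs (chainStep G g) lg hl _ _ (leOfHom (ULift.down h))

/-- The colimit of the chain: the "image". -/
noncomputable def imObj : C := colimit (chainF G g)

noncomputable def imι (n : ℕ) : chainE G g n ⟶ imObj G g :=
  colimit.ι (chainF G g) (AsSmall.up.obj n)

lemma imι_succ (n : ℕ) : chainStep G g n ≫ imι G g (n + 1) = imι G g n := by
  have h : (AsSmall.up.obj n : AsSmall.{v} ℕ) ⟶
      (AsSmall.up.obj (n + 1) : AsSmall.{v} ℕ) :=
    ULift.up (homOfLE (Nat.le_succ n))
  have hw := colimit.w (chainF G g) h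
  have hmap : (chainF G g).map h = chainStep G g n := by
    rw [chainF_map]
    erw [show ULift.down h = homOfLE (Nat.le_succ n) from Subsingleton.elim _ _,
      Functor.ofSequence_map_homOfLE_succ]
    rfl
  show chainStep G g n ≫ colimit.ι (chainF G g) (AsSmall.up.obj (n + 1)) =
    colimit.ι (chainF G g) (AsSmall.up.obj n)
  rw [← hw, hmap]; rfl

/-- The map `e : T ⟶ imObj`. -/
noncomputable def imE : T ⟶ imObj G g := imι G g 0

/-- The monomorphism-to-be `m : imObj ⟶ Z`. -/
noncomputable def imM : imObj G g ⟶ Z :=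
  colimit.desc (chainF G g)
    (coconeOfLegs (chainF G g) (fun j => chainG G g (ULift.down j))
      (fun _ _ u => chainF_comp_legs G g _ (chainStep_chainG G g) u))

@[simp] lemma imι_imM (n : ℕ) : imι G g n ≫ imM G g = chainG G g n :=
  colimit.ι_desc _ _

@[simp] lemma imE_imM : imE G g ≫ imM G g = g := imι_imM G g 0

lemma imE_epi : Epi (imE G g) := by
  constructor
  intro Y a b hab
  refine colimit.hom_ext (fun j => ?_)
  obtain ⟨n⟩ := j
  induction n with
  | zero => exact hab
  | succ n ih =>
      have h1 : chainStep G g n ≫ imι G g (n + 1) ≫ a =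
          chainStep G g n ≫ imι G g (n + 1) ≫ b := by
        rw [← Category.assoc, ← Category.assoc, imι_succ]
        exact ih
      exact (chainStep_epi G g n).left_cancellation _ _ h1

/-- The diagonal lifting property of the composite `e` against monos. -/
lemma imE_lift {W Y' : C} (mn : W ⟶ Y') [Mono mn] (t₀ : T ⟶ W) (q : imObj G g ⟶ Y')
    (hsq : imE G g ≫ q = t₀ ≫ mn) :
    ∃ d : imObj G g ⟶ W, imE G g ≫ d = t₀ ∧ d ≫ mn = q := by
  -- build compatible lifts along the chain
  let L : ∀ n : ℕ, { l : chainE G g n ⟶ W // l ≫ mn = imι G g n ≫ q } := fun n =>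
    Nat.rec (motive := fun n => { l : chainE G g n ⟶ W // l ≫ mn = imι G g n ≫ q })
      ⟨t₀, hsq.symm⟩
      (fun n p => by
        have hcond : pairFst G (chainE G g n) Z (chainG G g n) ≫ p.1 =
            pairSnd G (chainE G g n) Z (chainG G g n) ≫ p.1 := by
          have hππ : pairFst G (chainE G g n) Z (chainG G g n) ≫ imι G g n =
              pairSnd G (chainE G g n) Z (chainG G g n) ≫ imι G g n := by
            rw [← imι_succ G g n, ← Category.assoc, ← Category.assoc]
            congr 1
            exact coequalizer.condition _ _
          refine (cancel_mono mn).mp ?_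
          rw [Category.assoc, Category.assoc, p.2, ← Category.assoc, ← Category.assoc, hππ]
        refine ⟨coequalizer.desc p.1 hcond, ?_⟩
        refine (cancel_epi (chainStep G g n)).mp ?_
        erw [← Category.assoc, ← Category.assoc]
        show (coequalizer.π _ _ ≫ coequalizer.desc p.1 hcond) ≫ mn = _
        rw [coequalizer.π_desc, p.2, imι_succ]) n
  have Lcompat : ∀ n, chainStep G g n ≫ (L (n + 1)).1 = (L n).1 := fun n =>
    by exact coequalizer.π_desc _ _
  refine ⟨colimit.desc (chainF G g)
    (coconeOfLegs (chainF G g) (fun j => (L (ULift.down j)).1)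
      (fun _ _ u => chainF_comp_legs G g (fun n => (L n).1) Lcompat u)), ?_, ?_⟩
  · exact colimit.ι_desc _ _
  · refine colimit.hom_ext (fun j => ?_)
    erw [← Category.assoc, colimit.ι_desc]
    exact (L (ULift.down j)).2

/-- fp-points of the image are separated by `imM`. -/
lemma imM_fp_sep (hGsurj : ∀ R : C, LFF.IsFP R → ∃ a : A, Nonempty (G.obj a ≅ R)) (R : C)
    (hR : LFF.IsFP R) (α β : R ⟶ imObj G g)
    (h : α ≫ imM G g = β ≫ imM G g) : α = β := by
  obtain ⟨j₁, x, hx⟩ := Aux14.fp_factors hR (chainF G g) (colimit.cocone _)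
    (colimit.isColimit _) α
  obtain ⟨j₂, y, hy⟩ := Aux14.fp_factors hR (chainF G g) (colimit.cocone _)
    (colimit.isColimit _) β
  set n := max (ULift.down j₁) (ULift.down j₂) with hn
  have h₁ : j₁ ⟶ (AsSmall.up.obj n : AsSmall.{v} ℕ) := ULift.up (homOfLE (le_max_left _ _))
  have h₂ : j₂ ⟶ (AsSmall.up.obj n : AsSmall.{v} ℕ) := ULift.up (homOfLE (le_max_right _ _))
  have hleg : ∀ j : AsSmall.{v} ℕ,
      (colimit.cocone (chainF G g)).ι.app j ≫ imM G g = chainG G g (ULift.down j) :=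
    fun j => colimit.ι_desc _ _
  have hx2 : (x ≫ (chainF G g).map h₁) ≫ imι G g n = α := by
    erw [Category.assoc]
    show x ≫ (chainF G g).map h₁ ≫ colimit.ι (chainF G g) (AsSmall.up.obj n) = α
    rw [colimit.w (chainF G g) h₁]
    exact hx
  have hy2 : (y ≫ (chainF G g).map h₂) ≫ imι G g n = β := by
    erw [Category.assoc]
    show y ≫ (chainF G g).map h₂ ≫ colimit.ι (chainF G g) (AsSmall.up.obj n) = β
    rw [colimit.w (chainF G g) h₂]
    exact hy
  obtain ⟨a, ⟨e⟩⟩ := hGsurj R hR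
  have hw₁ : (chainF G g).map h₁ ≫ chainG G g n = chainG G g (ULift.down j₁) :=
    chainF_comp_legs G g (chainG G g) (chainStep_chainG G g) h₁
  have hw₂ : (chainF G g).map h₂ ≫ chainG G g n = chainG G g (ULift.down j₂) :=
    chainF_comp_legs G g (chainG G g) (chainStep_chainG G g) h₂
  have hα : x ≫ chainG G g (ULift.down j₁) = α ≫ imM G g := by
    erw [← hleg j₁, ← Category.assoc, hx]; rfl
  have hβ : y ≫ chainG G g (ULift.down j₂) = β ≫ imM G g := by
    erw [← hleg j₂, ← Category.assoc, hy]; rfl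
  have h5 : x ≫ chainG G g (ULift.down j₁) = y ≫ chainG G g (ULift.down j₂) := by
    rw [hα, hβ, h]
  have hkill : (e.hom ≫ x ≫ (chainF G g).map h₁) ≫ chainG G g n =
      (e.hom ≫ y ≫ (chainF G g).map h₂) ≫ chainG G g n := by
    have k1 : x ≫ (chainF G g).map h₁ ≫ chainG G g n = y ≫ (chainF G g).map h₂ ≫ chainG G g n :=
      (congrArg (x ≫ ·) hw₁).trans (h5.trans (congrArg (y ≫ ·) hw₂).symm)
    exact (Category.assoc _ _ _).trans ((congrArg (e.hom ≫ ·) ((Category.assoc _ _ _).trans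
      (k1.trans (Category.assoc _ _ _).symm))).trans (Category.assoc _ _ _).symm)
  have h6 := chain_kills G g n _ _ hkill
  have h7 : (x ≫ (chainF G g).map h₁) ≫ chainStep G g n =
      (y ≫ (chainF G g).map h₂) ≫ chainStep G g n := by
    exact (cancel_epi e.hom).mp ((Category.assoc _ _ _).symm.trans
      (h6.trans (Category.assoc _ _ _)))
  have h8 : α = ((x ≫ (chainF G g).map h₁) ≫ chainStep G g n) ≫ imι G g (n + 1) := by
    erw [Category.assoc, imι_succ]
    exact hx2.symm
  erw [h8, h7, Category.assoc, imι_succ, hy2]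

end Image

section Image2

variable {C : Type u} [Category.{v} C] [HasColimits C]
variable {A : Type v} [SmallCategory A] (G : A ⥤ C)

lemma imM_mono (hC : LFF.IsLFP C)
    (hGsurj : ∀ R : C, LFF.IsFP R → ∃ a : A, Nonempty (G.obj a ≅ R))
    {T Z : C} (g : T ⟶ Z) : Mono (imM G g) := by
  constructor
  intro W a b hab
  refine fp_reflect hC a b (fun R hR y => ?_)
  refine imM_fp_sep G g hGsurj R hR _ _ ?_
  rw [Category.assoc, Category.assoc, hab]

lemma im_isFG (hC : LFF.IsLFP C)
    (hGsurj : ∀ R : C, LFF.IsFP R → ∃ a : A, Nonempty (G.obj a ≅ R))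
    {T Z : C} (g : T ⟶ Z) (hT : LFF.IsFP T) : LFF.IsFG (imObj G g) := by
  refine isFG_of_factors hC _ ?_
  intro J _ _ F hmono c hc q
  obtain ⟨j, t₀, ht⟩ := fp_factors hT F c hc (imE G g ≫ q)
  haveI : Mono (c.ι.app j) := legs_mono hC F hmono c hc j
  obtain ⟨d, _, hd2⟩ := imE_lift G g (c.ι.app j) t₀ q ht.symm
  exact ⟨j, d, hd2⟩

end Image2

section Canonical

variable {C : Type u} [Category.{v} C] [HasColimits C]
variable {A : Type v} [SmallCategory A] (G : A ⥤ C) [G.Full] [G.Faithful]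
variable {Y : C}

/-- factor a map from an fp object through a presentation. -/
lemma Pres.factors (P : Pres Y) {R : C} (hR : LFF.IsFP R) (q : R ⟶ Y) :
    ∃ (j : P.J) (t : R ⟶ P.F.obj j), t ≫ P.l j = q :=
  fp_factors hR P.F (coconeOfLegs P.F P.l P.w) P.hcolim q

lemma costructuredArrow_filtered (hC : LFF.IsLFP C)
    (hGfp : ∀ a : A, LFF.IsFP (G.obj a))
    (hGsurj : ∀ R : C, LFF.IsFP R → ∃ a : A, Nonempty (G.obj a ≅ R)) (Y : C) :
    IsFiltered (CostructuredArrow G Y) := by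
  have P := pres hC Y
  have hobj : ∀ j : P.J, ∃ (o : CostructuredArrow G Y) (e : G.obj o.left ≅ P.F.obj j),
      e.hom ≫ P.l j = o.hom := by
    intro j
    obtain ⟨a, ⟨e⟩⟩ := hGsurj _ (P.hfp j)
    exact ⟨CostructuredArrow.mk (e.hom ≫ P.l j), e, rfl⟩
  have hne : Nonempty (CostructuredArrow G Y) := by
    obtain ⟨j⟩ := IsFiltered.nonempty (C := P.J)
    obtain ⟨o, _, _⟩ := hobj j
    exact ⟨o⟩
  refine { nonempty := hne, cocone_objs := ?_, cocone_maps := ?_ }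
  · intro o₁ o₂
    obtain ⟨j₁, t₁, ht₁⟩ := P.factors (hGfp o₁.left) o₁.hom
    obtain ⟨j₂, t₂, ht₂⟩ := P.factors (hGfp o₂.left) o₂.hom
    obtain ⟨o₃, e₃, he₃⟩ := hobj (IsFiltered.max j₁ j₂)
    have hm1 : G.map (G.preimage (t₁ ≫ P.F.map (IsFiltered.leftToMax j₁ j₂) ≫ e₃.inv)) ≫
        o₃.hom = o₁.hom := by
      rw [Functor.map_preimage, ← he₃]
      rw [Category.assoc, Category.assoc, Iso.inv_hom_id_assoc, P.w, ht₁]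
    have hm2 : G.map (G.preimage (t₂ ≫ P.F.map (IsFiltered.rightToMax j₁ j₂) ≫ e₃.inv)) ≫
        o₃.hom = o₂.hom := by
      rw [Functor.map_preimage, ← he₃]
      rw [Category.assoc, Category.assoc, Iso.inv_hom_id_assoc, P.w, ht₂]
    exact ⟨o₃, CostructuredArrow.homMk _ hm1, CostructuredArrow.homMk _ hm2, trivial⟩
  · intro o₁ o₂ u v
    obtain ⟨j₂, t₂, ht₂⟩ := P.factors (hGfp o₂.left) o₂.hom
    have heq : (G.map u.left ≫ t₂) ≫ P.l j₂ = (G.map v.left ≫ t₂) ≫ P.l j₂ := by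
      rw [Category.assoc, ht₂, Category.assoc, ht₂]
      rw [CostructuredArrow.w u, CostructuredArrow.w v]
    obtain ⟨l, u', v', huv⟩ := fp_eq_at_stage (hGfp o₁.left) P.F
      (coconeOfLegs P.F P.l P.w) P.hcolim _ _ heq
    set w₀ := u' ≫ IsFiltered.coeqHom u' v' with hw₀
    have hsingle : (G.map u.left ≫ t₂) ≫ P.F.map w₀ = (G.map v.left ≫ t₂) ≫ P.F.map w₀ := by
      rw [hw₀, P.F.map_comp, ← Category.assoc, huv, Category.assoc,
        ← P.F.map_comp, ← IsFiltered.coeq_condition, P.F.map_comp, Category.assoc]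
    obtain ⟨o₄, e₄, he₄⟩ := hobj (IsFiltered.coeq u' v')
    have hm4 : G.map (G.preimage (t₂ ≫ P.F.map w₀ ≫ e₄.inv)) ≫ o₄.hom = o₂.hom := by
      rw [Functor.map_preimage, ← he₄]
      rw [Category.assoc, Category.assoc, Iso.inv_hom_id_assoc, P.w, ht₂]
    refine ⟨o₄, CostructuredArrow.homMk (G.preimage (t₂ ≫ P.F.map w₀ ≫ e₄.inv)) hm4, ?_⟩
    ext
    apply G.map_injective
    simp only [CostructuredArrow.comp_left, CostructuredArrow.homMk_left, G.map_comp,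
      Functor.map_preimage]
    simp only [← Category.assoc]
    rw [hsingle]

/-- The canonical cocone over the costructured arrow category. -/
def canCocone (Y : C) : Cocone (CostructuredArrow.proj G Y ⋙ G) :=
  coconeOfLegs _ (fun o => o.hom) (fun o o' u => CostructuredArrow.w u)

noncomputable def canIsColimit (hC : LFF.IsLFP C)
    (hGfp : ∀ a : A, LFF.IsFP (G.obj a))
    (hGsurj : ∀ R : C, LFF.IsFP R → ∃ a : A, Nonempty (G.obj a ≅ R)) (Y : C) :
    IsColimit (canCocone G Y) := by
  have P := pres hC Y
  have hobj : ∀ j : P.J, ∃ (o : CostructuredArrow G Y) (e : G.obj o.left ≅ P.F.obj j),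
      e.hom ≫ P.l j = o.hom := by
    intro j
    obtain ⟨a, ⟨e⟩⟩ := hGsurj _ (P.hfp j)
    exact ⟨CostructuredArrow.mk (e.hom ≫ P.l j), e, rfl⟩
  choose obj e he using hobj
  have hnat : ∀ (s : Cocone (CostructuredArrow.proj G Y ⋙ G)) (j j' : P.J) (u : j ⟶ j'),
      P.F.map u ≫ ((e j').inv ≫ s.ι.app (obj j')) = (e j).inv ≫ s.ι.app (obj j) := by
    intro s j j' u
    have hmor : G.map (G.preimage ((e j).hom ≫ P.F.map u ≫ (e j').inv)) ≫ (obj j').hom =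
        (obj j).hom := by
      rw [Functor.map_preimage, ← he j', ← he j]
      rw [Category.assoc, Category.assoc, Iso.inv_hom_id_assoc, P.w]
    have hs := s.w (CostructuredArrow.homMk
      (G.preimage ((e j).hom ≫ P.F.map u ≫ (e j').inv)) hmor : obj j ⟶ obj j')
    have hs' : (e j).hom ≫ P.F.map u ≫ (e j').inv ≫ s.ι.app (obj j') = s.ι.app (obj j) := by
      rw [← hs]
      show _ = G.map (G.preimage _) ≫ _
      erw [Functor.map_preimage, Category.assoc, Category.assoc]; rfl
    calc P.F.map u ≫ (e j').inv ≫ s.ι.app (obj j')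
        = (e j).inv ≫ (e j).hom ≫ P.F.map u ≫ (e j').inv ≫ s.ι.app (obj j') := by
          rw [Iso.inv_hom_id_assoc]
      _ = (e j).inv ≫ s.ι.app (obj j) := by rw [hs']
  refine ⟨fun s => P.hcolim.desc (coconeOfLegs P.F (fun j => (e j).inv ≫ s.ι.app (obj j))
    (fun j j' u => hnat s j j' u)), ?_, ?_⟩
  · intro s o
    obtain ⟨j, t, ht⟩ := P.factors (hGfp o.left) o.hom
    have hl : P.l j ≫ P.hcolim.desc (coconeOfLegs P.F
        (fun j => (e j).inv ≫ s.ι.app (obj j)) (fun j j' u => hnat s j j' u)) =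
        (e j).inv ≫ s.ι.app (obj j) :=
      P.hcolim.fac (coconeOfLegs P.F (fun j => (e j).inv ≫ s.ι.app (obj j))
        (fun j j' u => hnat s j j' u)) j
    show o.hom ≫ _ = s.ι.app o
    erw [← ht, Category.assoc, hl]
    have hmor : G.map (G.preimage (t ≫ (e j).inv)) ≫ (obj j).hom = o.hom := by
      rw [Functor.map_preimage, ← he j, Category.assoc, Iso.inv_hom_id_assoc, ht]
    have hs := s.w (CostructuredArrow.homMk (G.preimage (t ≫ (e j).inv)) hmor : o ⟶ obj j)
    have hs' : t ≫ (e j).inv ≫ s.ι.app (obj j) = s.ι.app o := by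
      rw [← hs]
      show _ = G.map (G.preimage _) ≫ _
      erw [Functor.map_preimage, Category.assoc]; rfl
    erw [← Category.assoc, Category.assoc, hs']
  · intro s dm hdm
    refine P.hcolim.uniq (coconeOfLegs P.F (fun j => (e j).inv ≫ s.ι.app (obj j))
      (fun j j' u => hnat s j j' u)) dm (fun j => ?_)
    show P.l j ≫ dm = (e j).inv ≫ s.ι.app (obj j)
    have : P.l j = (e j).inv ≫ (obj j).hom := by rw [← he j, Iso.inv_hom_id_assoc]
    erw [this, Category.assoc]
    congr 1
    exact hdm (obj j)

end Canonical

section Diag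

variable {C : Type u} [Category.{v} C] [HasColimits C]
variable {A : Type v} [SmallCategory A] (G : A ⥤ C) [G.Full] [G.Faithful]
variable (hC : LFF.IsLFP C)
variable (hGsurj : ∀ R : C, LFF.IsFP R → ∃ a : A, Nonempty (G.obj a ≅ R))
variable {Y : C}

lemma imMap_sq {o o' : CostructuredArrow G Y} (u : o ⟶ o') :
    imE G o.hom ≫ imM G o.hom = (G.map u.left ≫ imE G o'.hom) ≫ imM G o'.hom := by
  rw [imE_imM, Category.assoc, imE_imM, CostructuredArrow.w u]

noncomputable def imMap {o o' : CostructuredArrow G Y} (u : o ⟶ o') :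
    imObj G o.hom ⟶ imObj G o'.hom :=
  letI : Mono (imM G o'.hom) := imM_mono G hC hGsurj o'.hom
  (imE_lift G o.hom (imM G o'.hom) (G.map u.left ≫ imE G o'.hom) (imM G o.hom)
    (imMap_sq G u)).choose

lemma imMap_spec {o o' : CostructuredArrow G Y} (u : o ⟶ o') :
    imE G o.hom ≫ imMap G hC hGsurj u = G.map u.left ≫ imE G o'.hom ∧
    imMap G hC hGsurj u ≫ imM G o'.hom = imM G o.hom :=
  letI : Mono (imM G o'.hom) := imM_mono G hC hGsurj o'.hom
  (imE_lift G o.hom (imM G o'.hom) (G.map u.left ≫ imE G o'.hom) (imM G o.hom)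
    (imMap_sq G u)).choose_spec

lemma imMap_e {o o' : CostructuredArrow G Y} (u : o ⟶ o') :
    imE G o.hom ≫ imMap G hC hGsurj u = G.map u.left ≫ imE G o'.hom :=
  (imMap_spec G hC hGsurj u).1

lemma imMap_m {o o' : CostructuredArrow G Y} (u : o ⟶ o') :
    imMap G hC hGsurj u ≫ imM G o'.hom = imM G o.hom :=
  (imMap_spec G hC hGsurj u).2

lemma imMap_mono {o o' : CostructuredArrow G Y} (u : o ⟶ o') :
    Mono (imMap G hC hGsurj u) := by
  haveI : Mono (imMap G hC hGsurj u ≫ imM G o'.hom) := by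
    rw [imMap_m]
    exact imM_mono G hC hGsurj o.hom
  exact mono_of_mono (imMap G hC hGsurj u) (imM G o'.hom)

noncomputable def imDiag (Y : C) : CostructuredArrow G Y ⥤ C where
  obj o := imObj G o.hom
  map {o o'} u := imMap G hC hGsurj u
  map_id o := by
    haveI : Mono (imM G o.hom) := imM_mono G hC hGsurj o.hom
    refine (cancel_mono (imM G o.hom)).mp ?_
    rw [imMap_m, Category.id_comp]
  map_comp {o o' o''} u v := by
    haveI : Mono (imM G o''.hom) := imM_mono G hC hGsurj o''.hom
    refine (cancel_mono (imM G o''.hom)).mp ?_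
    rw [imMap_m, Category.assoc, imMap_m, imMap_m]

noncomputable def imCocone (Y : C) : Cocone (imDiag G hC hGsurj Y) :=
  coconeOfLegs _ (fun o => imM G o.hom) (fun o o' u => imMap_m G hC hGsurj u)

noncomputable def imIsColimit (hGfp : ∀ a : A, LFF.IsFP (G.obj a)) (Y : C) :
    IsColimit (imCocone G hC hGsurj Y) := by
  have hcan := canIsColimit G hC hGfp hGsurj Y
  have hnat : ∀ (s : Cocone (imDiag G hC hGsurj Y)) (o o' : CostructuredArrow G Y)
      (u : o ⟶ o'), (CostructuredArrow.proj G Y ⋙ G).map u ≫ (imE G o'.hom ≫ s.ι.app o') =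
        imE G o.hom ≫ s.ι.app o := by
    intro s o o' u
    have h1 : (CostructuredArrow.proj G Y ⋙ G).map u ≫ imE G o'.hom =
        imE G o.hom ≫ imMap G hC hGsurj u := (imMap_e G hC hGsurj u).symm
    erw [← Category.assoc, h1, Category.assoc]
    congr 1
    exact s.w u
  refine ⟨fun s => hcan.desc (coconeOfLegs _ (fun o => imE G o.hom ≫ s.ι.app o)
    (fun o o' u => hnat s o o' u)), ?_, ?_⟩
  · intro s o
    haveI : Epi (imE G o.hom) := imE_epi G o.hom
    refine (cancel_epi (imE G o.hom)).mp ?_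
    have hfac := hcan.fac (coconeOfLegs _ (fun o => imE G o.hom ≫ s.ι.app o)
      (fun o o' u => hnat s o o' u)) o
    show imE G o.hom ≫ (imCocone G hC hGsurj Y).ι.app o ≫ _ = imE G o.hom ≫ s.ι.app o
    erw [← Category.assoc]
    show (imE G o.hom ≫ imM G o.hom) ≫ _ = _
    rw [imE_imM]
    exact hfac
  · intro s dm hdm
    refine hcan.uniq (coconeOfLegs _ (fun o => imE G o.hom ≫ s.ι.app o)
      (fun o o' u => hnat s o o' u)) dm (fun o => ?_)
    show o.hom ≫ dm = imE G o.hom ≫ s.ι.app o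
    conv_lhs => rw [← imE_imM G o.hom]
    erw [Category.assoc]
    congr 1
    exact hdm o

end Diag

section Crux

variable {C : Type u} [Category.{v} C]

lemma not_SI_push [HasColimits C] {A : Type v} [SmallCategory A] (G : A ⥤ C)
    [G.Full] [G.Faithful] (hC : LFF.IsLFP C)
    (hGsurj : ∀ R : C, LFF.IsFP R → ∃ a : A, Nonempty (G.obj a ≅ R))
    {Y : C} {o o' : CostructuredArrow G Y} (u : o ⟶ o')
    (h : ¬ LFF.IsStrictInitial (imObj G o.hom)) :
    ¬ LFF.IsStrictInitial (imObj G o'.hom) := by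
  intro h'
  haveI : IsIso (imMap G hC hGsurj u) := h'.2 _ _
  exact h (isStrictInitial_of_iso h' (asIso (imMap G hC hGsurj u)).symm)

lemma crux (hC : LFF.IsLFP C) (H : C ⥤ C) (hfin : LFF.IsFinitary H)
    (hm : LFF.PreservesNonemptyMonos H) (Y : C) (S : C) (hS : LFF.IsFG S)
    (f : S ⟶ H.obj Y) :
    ∃ (T : C) (γ : T ⟶ Y) (w : S ⟶ H.obj T), LFF.IsFG T ∧ w ≫ H.map γ = f := by
  haveI := hC.1
  haveI := hC.2.1
  let D := ObjectProperty.FullSubcategory (fun X : C => LFF.IsFP X)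
  let A := SmallModel D
  let G : A ⥤ C := (equivSmallModel D).inverse ⋙ ObjectProperty.ι (P := _)
  haveI : G.Full := Functor.Full.comp _ _
  haveI : G.Faithful := Functor.Faithful.comp _ _
  have hGfp : ∀ a : A, LFF.IsFP (G.obj a) := fun a => ((equivSmallModel D).inverse.obj a).2
  have hGsurj : ∀ R : C, LFF.IsFP R → ∃ a : A, Nonempty (G.obj a ≅ R) := by
    intro R hR
    refine ⟨(equivSmallModel D).functor.obj ⟨R, hR⟩, ⟨?_⟩⟩
    exact (ObjectProperty.ι (P := _)).mapIso ((equivSmallModel D).unitIso.symm.app ⟨R, hR⟩)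
  haveI hfilt : IsFiltered (CostructuredArrow G Y) :=
    costructuredArrow_filtered G hC hGfp hGsurj Y
  have hcolim := imIsColimit G hC hGsurj hGfp Y
  by_cases hall : ∀ o : CostructuredArrow G Y, LFF.IsStrictInitial (imObj G o.hom)
  · -- all images are strict initial: `Y` is initial
    have hinit : IsInitial Y := by
      refine IsInitial.ofUniqueHom (fun W => hcolim.desc (coconeOfLegs _
        (fun o => (hall o).1.some.to W)
        (fun o o' u => (hall o).1.some.hom_ext _ _))) (fun W dm => ?_)
      exact hcolim.uniq (coconeOfLegs _ (fun o => (hall o).1.some.to W)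
        (fun o o' u => (hall o).1.some.hom_ext _ _)) dm
        (fun o => (hall o).1.some.hom_ext _ _)
    refine ⟨Y, 𝟙 Y, f, isFG_of_isInitial hC hinit, by simp⟩
  · push_neg at hall
    obtain ⟨o₀, ho₀⟩ := hall
    classical
    let Jne := ObjectProperty.FullSubcategory (fun o : CostructuredArrow G Y =>
      ¬ LFF.IsStrictInitial (imObj G o.hom))
    let incl := ObjectProperty.ι (P := fun o : CostructuredArrow G Y =>
      ¬ LFF.IsStrictInitial (imObj G o.hom))
    haveI : IsFiltered Jne := by
      refine { nonempty := ⟨⟨o₀, ho₀⟩⟩, cocone_objs := ?_, cocone_maps := ?_ }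
      · intro x y
        let z₁ := IsFiltered.max x.1 y.1
        let z₂ := IsFiltered.max z₁ o₀
        have hz₂ : ¬ LFF.IsStrictInitial (imObj G z₂.hom) :=
          not_SI_push G hC hGsurj (IsFiltered.rightToMax z₁ o₀) ho₀
        exact ⟨⟨z₂, hz₂⟩,
          ObjectProperty.homMk (IsFiltered.leftToMax x.1 y.1 ≫ IsFiltered.leftToMax z₁ o₀ : x.1 ⟶ z₂),
          ObjectProperty.homMk (IsFiltered.rightToMax x.1 y.1 ≫ IsFiltered.leftToMax z₁ o₀ : y.1 ⟶ z₂), trivial⟩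
      · intro x y u v
        let uu := incl.map u
        let vv := incl.map v
        let z := IsFiltered.coeq uu vv
        let z' := IsFiltered.max z o₀
        have hz' : ¬ LFF.IsStrictInitial (imObj G z'.hom) :=
          not_SI_push G hC hGsurj (IsFiltered.rightToMax z o₀) ho₀
        refine ⟨⟨z', hz'⟩,
          ObjectProperty.homMk (IsFiltered.coeqHom uu vv ≫ IsFiltered.leftToMax z o₀ : y.1 ⟶ z'), ?_⟩
        apply ObjectProperty.hom_ext
        show uu ≫ IsFiltered.coeqHom uu vv ≫ IsFiltered.leftToMax z o₀ =
          vv ≫ IsFiltered.coeqHom uu vv ≫ IsFiltered.leftToMax z o₀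
        erw [← Category.assoc, ← Category.assoc, IsFiltered.coeq_condition uu vv]
    let Dne := incl ⋙ imDiag G hC hGsurj Y
    let rc : Cocone Dne := coconeOfLegs Dne (fun o => imM G o.1.hom)
      (fun o o' u => imMap_m G hC hGsurj (incl.map u))
    have hrc : IsColimit rc := by
      have hnat : ∀ (s : Cocone Dne) (o o' : CostructuredArrow G Y) (u : o ⟶ o'),
          (imDiag G hC hGsurj Y).map u ≫
            (if h : LFF.IsStrictInitial (imObj G o'.hom) then h.1.some.to s.pt
              else s.ι.app ⟨o', h⟩) =
            (if h : LFF.IsStrictInitial (imObj G o.hom) then h.1.some.to s.pt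
              else s.ι.app ⟨o, h⟩) := by
        intro s o o' u
        by_cases ho : LFF.IsStrictInitial (imObj G o.hom)
        · exact ho.1.some.hom_ext _ _
        · have ho' := not_SI_push G hC hGsurj u ho
          erw [dif_neg ho, dif_neg ho']
          exact s.w (show (⟨o, ho⟩ : Jne) ⟶ (⟨o', ho'⟩ : Jne) from ObjectProperty.homMk u)
      refine ⟨fun s => hcolim.desc (coconeOfLegs _
        (fun o => if h : LFF.IsStrictInitial (imObj G o.hom) then h.1.some.to s.pt
          else s.ι.app ⟨o, h⟩) (fun o o' u => hnat s o o' u)), ?_, ?_⟩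
      · intro s o
        have hfac := hcolim.fac (coconeOfLegs _
          (fun o => if h : LFF.IsStrictInitial (imObj G o.hom) then h.1.some.to s.pt
            else s.ι.app ⟨o, h⟩) (fun o o' u => hnat s o o' u)) o.1
        exact hfac.trans (dif_neg o.2)
      · intro s dm hdm
        refine hcolim.uniq (coconeOfLegs _
          (fun o => if h : LFF.IsStrictInitial (imObj G o.hom) then h.1.some.to s.pt
            else s.ι.app ⟨o, h⟩) (fun o o' u => hnat s o o' u)) dm (fun o => ?_)
        by_cases ho : LFF.IsStrictInitial (imObj G o.hom)
        · exact ho.1.some.hom_ext _ _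
        · exact (hdm ⟨o, ho⟩).trans (by
            show s.ι.app ⟨o, ho⟩ = (if h : LFF.IsStrictInitial (imObj G o.hom) then h.1.some.to s.pt
              else s.ι.app ⟨o, h⟩)
            erw [dif_neg ho])
    obtain ⟨hpres⟩ := hfin Jne
    haveI := hpres
    have hHcolim : IsColimit (H.mapCocone rc) := isColimitOfPreserves H hrc
    have hmonos : ∀ ⦃x y : Jne⦄ (u : x ⟶ y), Mono ((Dne ⋙ H).map u) := by
      intro x y u
      show Mono (H.map (imMap G hC hGsurj (incl.map u)))
      exact hm _ (imMap_mono G hC hGsurj (incl.map u)) x.2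
    obtain ⟨hmapped⟩ := hS Jne (Dne ⋙ H) hmonos (H.mapCocone rc) ⟨hHcolim⟩
    obtain ⟨o, w, hw⟩ := Types.jointly_surjective _ hmapped
      (f : ((coyoneda.obj (Opposite.op S)).mapCocone (H.mapCocone rc)).pt)
    refine ⟨imObj G o.1.hom, imM G o.1.hom, w,
      im_isFG G hC hGsurj o.1.hom (hGfp o.1.left), ?_⟩
    exact hw

end Crux

end Aux14

open LFF in
/-- If `(C, c)` is an lfg coalgebra, then so is `(HC, Hc)`. -/
theorem stmt14 {C : Type u} [Category.{v} C] (hC : IsLFP C)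
    (H : C ⥤ C) (hfin : IsFinitary H) (hm : PreservesNonemptyMonos H)
    (X : Endofunctor.Coalgebra H) (hX : IsLFGCoalgebra H X) :
    IsLFGCoalgebra H ⟨H.obj X.V, H.map X.str⟩ := by
  intro S hS f
  haveI := hC.1
  obtain ⟨T, γ, w0, hT, hfac⟩ := Aux14.crux hC H hfin hm X.V S hS f
  obtain ⟨P, h, f₂, hPfg, hf₂⟩ := hX T hT γ
  have hwf : (w0 ≫ H.map f₂) ≫ H.map h.f = f := by
    rw [Category.assoc, ← H.map_comp, hf₂, hfac]
  refine ⟨⟨S ⨿ P.V, coprod.desc ((w0 ≫ H.map f₂) ≫ H.map coprod.inr)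
      (P.str ≫ H.map coprod.inr)⟩,
    ⟨coprod.desc f (P.str ≫ H.map h.f), ?_⟩, coprod.inl,
    Aux14.isFG_coprod hC hS hPfg, by exact coprod.inl_desc _ _⟩
  show coprod.desc ((w0 ≫ H.map f₂) ≫ H.map coprod.inr) (P.str ≫ H.map coprod.inr) ≫
      H.map (coprod.desc f (P.str ≫ H.map h.f)) =
    coprod.desc f (P.str ≫ H.map h.f) ≫ H.map X.str
  refine coprod.hom_ext ?_ ?_
  · rw [coprod.inl_desc_assoc, coprod.inl_desc_assoc]
    conv_lhs => rw [Category.assoc, Category.assoc, ← H.map_comp, coprod.inr_desc]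
    conv_rhs => rw [← hwf, Category.assoc, Category.assoc, ← H.map_comp, ← h.h]
  · rw [coprod.inr_desc_assoc, coprod.inr_desc_assoc]
    conv_lhs => rw [Category.assoc, ← H.map_comp, coprod.inr_desc]
    conv_rhs => rw [Category.assoc, ← H.map_comp, ← h.h]
end

section
/- Let A be an fg-iterative H-algebra and (X, e) an lfg coalgebra. Then there exists a unique coalgebra-to-algebra morphism u : X → A satisfying u = α ∘ Hu ∘ e. -/
open CategoryTheory CategoryTheory.Limits

universe v u

namespace LFF17
open LFF

variable {C : Type u} [Category.{v} C]

lemma isFG_of_isFP {S : C} (h : IsFP S) : IsFG S :=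
  fun J _ _ F _ c hc => h J F c hc

/-- factoring a morphism from an FP object through a stage of a filtered colimit -/
lemma fp_factor {S : C} (hS : IsFP S) {J : Type v} [SmallCategory J] [IsFiltered J]
    {F : J ⥤ C} {c : Cocone F} (hc : IsColimit c) (t : S ⟶ c.pt) :
    ∃ (j : J) (v : S ⟶ F.obj j), v ≫ c.ι.app j = t := by
  obtain ⟨hc'⟩ := hS J F c ⟨hc⟩
  obtain ⟨j, y, hy⟩ := Types.jointly_surjective _ hc' t
  exact ⟨j, y, hy⟩

lemma fg_factor {S : C} (hS : IsFG S) {J : Type v} [SmallCategory J] [IsFiltered J]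
    {F : J ⥤ C} (hmono : ∀ ⦃i j : J⦄ (f : i ⟶ j), Mono (F.map f))
    {c : Cocone F} (hc : IsColimit c) (t : S ⟶ c.pt) :
    ∃ (j : J) (v : S ⟶ F.obj j), v ≫ c.ι.app j = t := by
  obtain ⟨hc'⟩ := hS J F hmono c ⟨hc⟩
  obtain ⟨j, y, hy⟩ := Types.jointly_surjective _ hc' t
  exact ⟨j, y, hy⟩

/-- In a filtered colimit of a mono-diagram, maps from an FG object are detected stagewise. -/
lemma fg_collapse {S : C} (hS : IsFG S) {J : Type v} [SmallCategory J] [IsFiltered J]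
    {F : J ⥤ C} (hmono : ∀ ⦃i j : J⦄ (f : i ⟶ j), Mono (F.map f))
    {c : Cocone F} (hc : IsColimit c) {j : J} {a b : S ⟶ F.obj j}
    (h : a ≫ c.ι.app j = b ≫ c.ι.app j) : a = b := by
  obtain ⟨hc'⟩ := hS J F hmono c ⟨hc⟩
  have h' : ((coyoneda.obj (Opposite.op S)).mapCocone c).ι.app j a =
      ((coyoneda.obj (Opposite.op S)).mapCocone c).ι.app j b := h
  obtain ⟨k, f, g, hfg⟩ :=
    (Types.FilteredColimit.isColimit_eq_iff (F ⋙ coyoneda.obj (Opposite.op S)) hc').mp h'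
  have hfg' : a ≫ F.map f = b ≫ F.map g := hfg
  have h2 : a ≫ F.map (f ≫ IsFiltered.coeqHom f g) = b ≫ F.map (f ≫ IsFiltered.coeqHom f g) := by
    conv_rhs => rw [IsFiltered.coeq_condition f g]
    rw [F.map_comp, F.map_comp, ← Category.assoc, ← Category.assoc, hfg']
  exact (cancel_mono (F.map (f ≫ IsFiltered.coeqHom f g))).mp h2

/-- FP objects form a separating family: detect monomorphisms. -/
lemma sep_mono (hC : IsLFP C) {Y Z : C} (x : Y ⟶ Z)
    (h : ∀ (S : C), IsFP S → ∀ a b : S ⟶ Y, a ≫ x = b ≫ x → a = b) : Mono x := by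
  constructor
  intro T p q hpq
  obtain ⟨J, _, _, F, c, hFP, ⟨hc⟩, ⟨φ⟩⟩ := hC.2.2 T
  have : φ.hom ≫ p = φ.hom ≫ q := by
    apply hc.hom_ext
    intro j
    have := h (F.obj j) (hFP j) (c.ι.app j ≫ φ.hom ≫ p) (c.ι.app j ≫ φ.hom ≫ q)
    simp only [Category.assoc] at this ⊢
    exact this (by rw [hpq])
  calc p = φ.inv ≫ (φ.hom ≫ p) := by simp
  _ = φ.inv ≫ (φ.hom ≫ q) := by rw [this]
  _ = q := by simp

/-- Binary coproducts of FG objects are FG. -/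
lemma fg_coprod [HasBinaryCoproducts C] {P Q : C} (hP : IsFG P) (hQ : IsFG Q) :
    IsFG (P ⨿ Q) := by
  intro J _ _ F hmono c ⟨hc⟩
  refine ⟨Types.FilteredColimit.isColimitOf _ _ ?_ ?_⟩
  · intro (x : P ⨿ Q ⟶ c.pt)
    obtain ⟨j₁, v₁, hv₁⟩ := fg_factor hP hmono hc (coprod.inl ≫ x)
    obtain ⟨j₂, v₂, hv₂⟩ := fg_factor hQ hmono hc (coprod.inr ≫ x)
    obtain ⟨k, f, g, -⟩ := IsFilteredOrEmpty.cocone_objs j₁ j₂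
    refine ⟨k, coprod.desc (v₁ ≫ F.map f) (v₂ ≫ F.map g), ?_⟩
    show x = coprod.desc (v₁ ≫ F.map f) (v₂ ≫ F.map g) ≫ c.ι.app k
    apply coprod.hom_ext
    · rw [coprod.inl_desc_assoc, Category.assoc, c.w f, hv₁]
    · rw [coprod.inr_desc_assoc, Category.assoc, c.w g, hv₂]
  · intro i j (xi : P ⨿ Q ⟶ F.obj i) (xj : P ⨿ Q ⟶ F.obj j) hij
    obtain ⟨k, f, g, -⟩ := IsFilteredOrEmpty.cocone_objs i j
    refine ⟨k, f, g, ?_⟩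
    have hij' : xi ≫ c.ι.app i = xj ≫ c.ι.app j := hij
    show xi ≫ F.map f = xj ≫ F.map g
    have h1 : (xi ≫ F.map f) ≫ c.ι.app k = (xj ≫ F.map g) ≫ c.ι.app k := by
      rw [Category.assoc, Category.assoc, c.w f, c.w g, hij']
    apply coprod.hom_ext
    · apply fg_collapse hP hmono hc (j := k)
      show (coprod.inl ≫ xi ≫ F.map f) ≫ c.ι.app k = (coprod.inl ≫ xj ≫ F.map g) ≫ c.ι.app k
      simp only [Category.assoc]
      rw [c.w f, c.w g]
      exact congrArg (fun z => coprod.inl ≫ z) hij'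
    · apply fg_collapse hQ hmono hc (j := k)
      show (coprod.inr ≫ xi ≫ F.map f) ≫ c.ι.app k = (coprod.inr ≫ xj ≫ F.map g) ≫ c.ι.app k
      simp only [Category.assoc]
      rw [c.w f, c.w g]
      exact congrArg (fun z => coprod.inr ≫ z) hij' 





section Chain

variable {Vc : ℕ → C} (πc : ∀ n, Vc n ⟶ Vc (n + 1))

lemma ofSequence_comp {Z : C} (w : ∀ n, Vc n ⟶ Z) (hw : ∀ n, πc n ≫ w (n + 1) = w n) :
    ∀ (n m : ℕ) (g : (n : ℕ) ⟶ (m : ℕ)), (Functor.ofSequence πc).map g ≫ w m = w n := by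
  have key : ∀ (m n : ℕ) (h : n ≤ m), (Functor.ofSequence πc).map (homOfLE h) ≫ w m = w n := by
    intro m
    induction m with
    | zero =>
      intro n h
      obtain rfl : n = 0 := Nat.le_zero.mp h
      show (Functor.ofSequence πc).map (𝟙 (0:ℕ)) ≫ w 0 = w 0
      erw [CategoryTheory.Functor.map_id, Category.id_comp]
    | succ m ih =>
      intro n h
      rcases Nat.lt_or_ge n (m+1) with h' | h'
      · have hnm : n ≤ m := Nat.lt_succ_iff.mp h'
        show (Functor.ofSequence πc).map (homOfLE hnm ≫ homOfLE (Nat.le_add_right m 1)) ≫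
          w (m+1) = w n
        erw [Functor.map_comp, Category.assoc, Functor.ofSequence_map_homOfLE_succ, hw, ih]
      · obtain rfl : n = m + 1 := Nat.le_antisymm h h'
        show (Functor.ofSequence πc).map (𝟙 (m+1)) ≫ w (m+1) = w (m+1)
        erw [CategoryTheory.Functor.map_id, Category.id_comp]
  intro n m g
  exact key m n (leOfHom g)

/-- The chain functor as a functor from a `Type v` small filtered category. -/
noncomputable def chainF : AsSmall.{v} ℕ ⥤ C :=
  AsSmall.down ⋙ Functor.ofSequence πc

/-- A cocone on the chain from compatible maps. -/
noncomputable def chainCocone {Z : C} (w : ∀ n, Vc n ⟶ Z)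
    (hw : ∀ n, πc n ≫ w (n + 1) = w n) : Cocone (chainF πc) where
  pt := Z
  ι :=
    { app := fun x => w (ULift.down x)
      naturality := fun x y f => by
        have := ofSequence_comp πc w hw (ULift.down x) (ULift.down y) (AsSmall.down.map f)
        dsimp [chainF]
        erw [Category.comp_id]
        exact this }

variable [HasColimits C]

/-- colimit legs -/
noncomputable def chainι (n : ℕ) : Vc n ⟶ colimit (chainF πc) :=
  colimit.ι (chainF πc) (AsSmall.up.obj n)

lemma chainι_succ (n : ℕ) : πc n ≫ chainι πc (n + 1) = chainι πc n := by
  have := colimit.w (chainF πc) (AsSmall.up.map (homOfLE (Nat.le_add_right n 1)))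
  show πc n ≫ colimit.ι (chainF πc) (AsSmall.up.obj (n+1)) = colimit.ι (chainF πc) (AsSmall.up.obj n)
  rw [← this]
  congr 1
  exact (Functor.ofSequence_map_homOfLE_succ πc n).symm

noncomputable def chainDesc {Z : C} (w : ∀ n, Vc n ⟶ Z)
    (hw : ∀ n, πc n ≫ w (n + 1) = w n) : colimit (chainF πc) ⟶ Z :=
  colimit.desc _ (chainCocone πc w hw)

@[simp] lemma chainι_desc {Z : C} (w : ∀ n, Vc n ⟶ Z)
    (hw : ∀ n, πc n ≫ w (n + 1) = w n) (n : ℕ) :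
    chainι πc n ≫ chainDesc πc w hw = w n :=
  colimit.ι_desc _ _

lemma chain_hom_ext {Z : C} {f g : colimit (chainF πc) ⟶ Z}
    (h : ∀ n, chainι πc n ≫ f = chainι πc n ≫ g) : f = g := by
  apply colimit.hom_ext
  rintro ⟨n⟩
  exact h n

/-- the zeroth leg of the chain is epi when the connecting maps are epi -/
lemma chain_ι_zero_epi (hπ : ∀ n, Epi (πc n)) : Epi (chainι πc 0) := by
  have key : ∀ n, ∃ p : Vc 0 ⟶ Vc n, Epi p ∧ p ≫ chainι πc n = chainι πc 0 := by
    intro n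
    induction n with
    | zero => exact ⟨𝟙 _, inferInstance, Category.id_comp _⟩
    | succ n ih =>
      obtain ⟨p, hp, hcomp⟩ := ih
      refine ⟨p ≫ πc n, @epi_comp _ _ _ _ _ _ hp _ (hπ n), ?_⟩
      rw [Category.assoc, chainι_succ, hcomp]
  constructor
  intro Z x y hxy
  apply chain_hom_ext
  intro n
  obtain ⟨p, hp, hcomp⟩ := key n
  have : p ≫ chainι πc n ≫ x = p ≫ chainι πc n ≫ y := by
    rw [← Category.assoc, hcomp, ← Category.assoc, hcomp]; exact hxy
  exact (cancel_epi p).mp (by simpa using this)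

end Chain




section Step

variable [HasColimits C]
variable {K : Type v} (ob : K → C)

/-- Index of parallel pairs from skeleton objects equalized by `r`. -/
structure PairIdx {W XV : C} (r : W ⟶ XV) : Type v where
  s : K
  a : ob s ⟶ W
  b : ob s ⟶ W
  hab : a ≫ r = b ≫ r

variable {W XV : C}

noncomputable def stepA (r : W ⟶ XV) : (∐ fun p : PairIdx ob r => ob p.s) ⟶ W :=
  Sigma.desc fun p => p.a

noncomputable def stepB (r : W ⟶ XV) : (∐ fun p : PairIdx ob r => ob p.s) ⟶ W :=
  Sigma.desc fun p => p.b

noncomputable def stepObj (r : W ⟶ XV) : C := coequalizer (stepA ob r) (stepB ob r)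

noncomputable def stepπ (r : W ⟶ XV) : W ⟶ stepObj ob r := coequalizer.π _ _

instance (r : W ⟶ XV) : Epi (stepπ ob r) := by unfold stepπ; exact coequalizer.π_epi

noncomputable def stepr (r : W ⟶ XV) : stepObj ob r ⟶ XV :=
  coequalizer.desc r (by
    apply colimit.hom_ext
    rintro ⟨p⟩
    simp [stepA, stepB, p.hab])

@[simp] lemma stepπ_stepr (r : W ⟶ XV) : stepπ ob r ≫ stepr ob r = r :=
  coequalizer.π_desc _ _

lemma step_kill (hrep : ∀ T : C, IsFP T → ∃ s : K, Nonempty (ob s ≅ T))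
    (r : W ⟶ XV) {T : C} (hT : IsFP T) (a b : T ⟶ W) (h : a ≫ r = b ≫ r) :
    a ≫ stepπ ob r = b ≫ stepπ ob r := by
  obtain ⟨s, ⟨i⟩⟩ := hrep T hT
  have hp : (i.hom ≫ a) ≫ r = (i.hom ≫ b) ≫ r := by
    rw [Category.assoc, Category.assoc, h]
  have hcond := coequalizer.condition (stepA ob r) (stepB ob r)
  have h2 := congrArg (fun z => Sigma.ι (fun p : PairIdx ob r => ob p.s)
    (⟨s, i.hom ≫ a, i.hom ≫ b, hp⟩ : PairIdx ob r) ≫ z) hcond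
  simp only [← Category.assoc] at h2
  rw [show Sigma.ι (fun p : PairIdx ob r => ob p.s) ⟨s, i.hom ≫ a, i.hom ≫ b, hp⟩ ≫
      stepA ob r = i.hom ≫ a from Sigma.ι_desc _ _,
    show Sigma.ι (fun p : PairIdx ob r => ob p.s) ⟨s, i.hom ≫ a, i.hom ≫ b, hp⟩ ≫
      stepB ob r = i.hom ≫ b from Sigma.ι_desc _ _] at h2
  rw [Category.assoc, Category.assoc] at h2
  exact (cancel_epi i.hom).mp h2

end Step

section Tower

variable [HasColimits C]
variable {K : Type v} (ob : K → C)
variable {XV : C} {V0 : C} (r0 : V0 ⟶ XV)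

/-- The tower of iterated pair-quotients. -/
noncomputable def tower : ℕ → Σ (W : C), (W ⟶ XV)
  | 0 => ⟨V0, r0⟩
  | n+1 => ⟨stepObj ob (tower n).2, stepr ob (tower n).2⟩

noncomputable abbrev tV (n : ℕ) : C := (tower ob r0 n).1
noncomputable abbrev tr (n : ℕ) : tV ob r0 n ⟶ XV := (tower ob r0 n).2
noncomputable def tπ (n : ℕ) : tV ob r0 n ⟶ tV ob r0 (n+1) := stepπ ob (tr ob r0 n)

@[simp] lemma tπ_tr (n : ℕ) : tπ ob r0 n ≫ tr ob r0 (n+1) = tr ob r0 n :=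
  stepπ_stepr ob _

instance (n : ℕ) : Epi (tπ ob r0 n) := by unfold tπ stepπ; exact coequalizer.π_epi

/-- The colimit of the tower. -/
noncomputable def Vω : C := colimit (chainF (tπ ob r0))

noncomputable def eω : V0 ⟶ Vω ob r0 := chainι (tπ ob r0) 0

noncomputable def rω : Vω ob r0 ⟶ XV := chainDesc (tπ ob r0) (tr ob r0) (tπ_tr ob r0)

@[simp] lemma chainι_rω (n : ℕ) : chainι (tπ ob r0) n ≫ rω ob r0 = tr ob r0 n :=
  chainι_desc _ _ _ _

@[simp] lemma eω_rω : eω ob r0 ≫ rω ob r0 = r0 := chainι_rω ob r0 0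

instance : Epi (eω ob r0) := chain_ι_zero_epi _ (fun n => inferInstance)

/-- lifting maps through the tower -/
noncomputable def towerLift {Z : C} (u0 : V0 ⟶ Z) (P : ∀ n, (tV ob r0 n ⟶ Z) → Prop)
    (hP0 : P 0 u0)
    (hkill : ∀ n (u : tV ob r0 n ⟶ Z), P n u →
      ∀ (p : PairIdx ob (tr ob r0 n)), p.a ≫ u = p.b ≫ u)
    (hPsucc : ∀ n (u : tV ob r0 n ⟶ Z), P n u →
      ∀ (u' : tV ob r0 (n+1) ⟶ Z), tπ ob r0 n ≫ u' = u → P (n+1) u') :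
    ∀ n, {un : tV ob r0 n ⟶ Z // P n un} := fun n =>
  Nat.rec ⟨u0, hP0⟩ (fun n prev =>
    have hcoeq : stepA ob (tr ob r0 n) ≫ prev.1 = stepB ob (tr ob r0 n) ≫ prev.1 := by
      apply colimit.hom_ext
      rintro ⟨p⟩
      have := hkill n prev.1 prev.2 p
      simpa [stepA, stepB] using this
    ⟨coequalizer.desc prev.1 hcoeq,
      hPsucc n prev.1 prev.2 _ (coequalizer.π_desc _ _)⟩) n

lemma towerLift_zero {Z : C} (u0 : V0 ⟶ Z) (P : ∀ n, (tV ob r0 n ⟶ Z) → Prop)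
    (hP0 : P 0 u0) (hkill) (hPsucc) :
    (towerLift ob r0 u0 P hP0 hkill hPsucc 0).1 = u0 := rfl

lemma towerLift_succ {Z : C} (u0 : V0 ⟶ Z) (P : ∀ n, (tV ob r0 n ⟶ Z) → Prop)
    (hP0 : P 0 u0) (hkill) (hPsucc) (n : ℕ) :
    tπ ob r0 n ≫ (towerLift ob r0 u0 P hP0 hkill hPsucc (n+1)).1 =
      (towerLift ob r0 u0 P hP0 hkill hPsucc n).1 :=
  coequalizer.π_desc _ _


noncomputable def towerLiftDesc {Z : C} (u0 : V0 ⟶ Z) (P : ∀ n, (tV ob r0 n ⟶ Z) → Prop)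
    (hP0 : P 0 u0)
    (hkill : ∀ n (u : tV ob r0 n ⟶ Z), P n u →
      ∀ (p : PairIdx ob (tr ob r0 n)), p.a ≫ u = p.b ≫ u)
    (hPsucc : ∀ n (u : tV ob r0 n ⟶ Z), P n u →
      ∀ (u' : tV ob r0 (n+1) ⟶ Z), tπ ob r0 n ≫ u' = u → P (n+1) u') :
    Vω ob r0 ⟶ Z :=
  chainDesc (tπ ob r0) (fun n => (towerLift ob r0 u0 P hP0 hkill hPsucc n).1)
    (fun n => towerLift_succ ob r0 u0 P hP0 hkill hPsucc n)


@[simp] lemma chainι_towerLiftDesc {Z : C} (u0 : V0 ⟶ Z)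
    (P : ∀ n, (tV ob r0 n ⟶ Z) → Prop) (hP0) (hkill) (hPsucc) (n : ℕ) :
    chainι (tπ ob r0) n ≫ towerLiftDesc ob r0 u0 P hP0 hkill hPsucc =
      (towerLift ob r0 u0 P hP0 hkill hPsucc n).1 :=
  chainι_desc _ _ _ _

end Tower


section TowerProps

variable [HasColimits C]
variable {K : Type v} (ob : K → C)
variable {XV : C} {V0 : C} (r0 : V0 ⟶ XV)

lemma pair_killed {W : C} (r : W ⟶ XV) (p : PairIdx ob r) :
    p.a ≫ stepπ ob r = p.b ≫ stepπ ob r := by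
  have h := congrArg (fun z => Sigma.ι (fun p : PairIdx ob r => ob p.s) p ≫ z)
    (coequalizer.condition (stepA ob r) (stepB ob r))
  simp only [← Category.assoc] at h
  rw [show Sigma.ι (fun p : PairIdx ob r => ob p.s) p ≫ stepA ob r = p.a from Sigma.ι_desc _ _,
    show Sigma.ι (fun p : PairIdx ob r => ob p.s) p ≫ stepB ob r = p.b from Sigma.ι_desc _ _] at h
  exact h

lemma pair_killed_tπ {XV' V0' : C} (r0' : V0' ⟶ XV') (n : ℕ)
    (p : PairIdx ob (tr ob r0' n)) :
    p.a ≫ tπ ob r0' n = p.b ≫ tπ ob r0' n := pair_killed ob _ p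

lemma chainmap_ι {Vc : ℕ → C} (πc : ∀ n, Vc n ⟶ Vc (n+1)) (n m : ℕ) (h : n ≤ m) :
    (Functor.ofSequence πc).map (homOfLE h) ≫ chainι πc m = chainι πc n :=
  colimit.w (chainF πc) (AsSmall.up.map (homOfLE h))

/-- the induced map from the tower colimit to `XV` is mono -/
lemma rω_mono (hC : IsLFP C) (hrep : ∀ T : C, IsFP T → ∃ s : K, Nonempty (ob s ≅ T)) :
    Mono (rω ob r0) := by
  apply sep_mono hC
  intro T hT a b hab
  obtain ⟨x, va, hva⟩ := fp_factor hT (colimit.isColimit (chainF (tπ ob r0))) a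
  obtain ⟨y, vb, hvb⟩ := fp_factor hT (colimit.isColimit (chainF (tπ ob r0))) b
  set n := ULift.down x with hn
  set m := ULift.down y with hm
  set N := max n m with hN
  have hva' : va ≫ chainι (tπ ob r0) n = a := hva
  have hvb' : vb ≫ chainι (tπ ob r0) m = b := hvb
  set va2 : T ⟶ tV ob r0 N := va ≫ (Functor.ofSequence (tπ ob r0)).map
    (homOfLE (le_max_left n m)) with hva2
  set vb2 : T ⟶ tV ob r0 N := vb ≫ (Functor.ofSequence (tπ ob r0)).map
    (homOfLE (le_max_right n m)) with hvb2
  have ha2 : va2 ≫ chainι (tπ ob r0) N = a := by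
    erw [hva2, Category.assoc, chainmap_ι]
    exact hva'
  have hb2 : vb2 ≫ chainι (tπ ob r0) N = b := by
    erw [hvb2, Category.assoc, chainmap_ι]
    exact hvb'
  have heq : va2 ≫ tr ob r0 N = vb2 ≫ tr ob r0 N := by
    erw [← chainι_rω ob r0 N, ← Category.assoc, ← Category.assoc, ha2, hb2]
    exact hab
  have hkill : va2 ≫ tπ ob r0 N = vb2 ≫ tπ ob r0 N :=
    step_kill ob hrep (tr ob r0 N) hT va2 vb2 heq
  rw [← ha2, ← hb2, ← chainι_succ (tπ ob r0) N, ← Category.assoc, ← Category.assoc]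
  rw [hkill]

/-- the tower colimit is finitely generated -/
lemma Vω_fg (hobFP : ∀ s, IsFP (ob s)) (hQfg : IsFG V0) : IsFG (Vω ob r0) := by
  intro J' _ _ F' hmono c' ⟨hc'⟩
  refine ⟨Types.FilteredColimit.isColimitOf _ _ ?_ ?_⟩
  · intro (t : Vω ob r0 ⟶ c'.pt)
    obtain ⟨j, v0, hv0⟩ := fg_factor hQfg hmono hc' (eω ob r0 ≫ t)
    set P : ∀ n, (tV ob r0 n ⟶ F'.obj j) → Prop :=
      fun n u => u ≫ c'.ι.app j = chainι (tπ ob r0) n ≫ t with hPdef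
    have hP0 : P 0 v0 := hv0
    have hkill : ∀ n (u : tV ob r0 n ⟶ F'.obj j), P n u →
        ∀ (p : PairIdx ob (tr ob r0 n)), p.a ≫ u = p.b ≫ u := by
      intro n u hu p
      replace hu : u ≫ c'.ι.app j = chainι (tπ ob r0) n ≫ t := hu
      apply fg_collapse (isFG_of_isFP (hobFP p.s)) hmono hc'
      show (p.a ≫ u) ≫ c'.ι.app j = (p.b ≫ u) ≫ c'.ι.app j
      erw [Category.assoc, Category.assoc, hu, ← Category.assoc, ← Category.assoc]
      have : p.a ≫ chainι (tπ ob r0) n = p.b ≫ chainι (tπ ob r0) n := by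
        rw [← chainι_succ (tπ ob r0) n, ← Category.assoc, ← Category.assoc,
          pair_killed_tπ ob r0 n p]
      rw [this]
    have hPsucc : ∀ n (u : tV ob r0 n ⟶ F'.obj j), P n u →
        ∀ (u' : tV ob r0 (n+1) ⟶ F'.obj j), tπ ob r0 n ≫ u' = u → P (n+1) u' := by
      intro n u hu u' hu'
      replace hu : u ≫ c'.ι.app j = chainι (tπ ob r0) n ≫ t := hu
      show u' ≫ c'.ι.app j = chainι (tπ ob r0) (n+1) ≫ t
      erw [← cancel_epi (tπ ob r0 n), ← Category.assoc, hu', hu, ← Category.assoc,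
        chainι_succ]
    refine ⟨j, towerLiftDesc ob r0 v0 P hP0 hkill hPsucc, ?_⟩
    show t = towerLiftDesc ob r0 v0 P hP0 hkill hPsucc ≫ c'.ι.app j
    apply chain_hom_ext
    intro n
    erw [← Category.assoc, chainι_towerLiftDesc]
    exact (show (towerLift ob r0 v0 P hP0 hkill hPsucc n).1 ≫ c'.ι.app j =
      chainι (tπ ob r0) n ≫ t from (towerLift ob r0 v0 P hP0 hkill hPsucc n).2).symm
  · intro i j xi xj hij
    obtain ⟨k, f, g, -⟩ := IsFilteredOrEmpty.cocone_objs i j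
    refine ⟨k, f, g, ?_⟩
    have hij' : xi ≫ c'.ι.app i = xj ≫ c'.ι.app j := hij
    show xi ≫ F'.map f = xj ≫ F'.map g
    rw [← cancel_epi (eω ob r0)]
    apply fg_collapse hQfg hmono hc' (j := k)
    show (eω ob r0 ≫ xi ≫ F'.map f) ≫ c'.ι.app k = (eω ob r0 ≫ xj ≫ F'.map g) ≫ c'.ι.app k
    simp only [Category.assoc]
    rw [c'.w f, c'.w g, hij']

end TowerProps

section ImagifyFinal

lemma skeleton (hC : IsLFP C) :
    ∃ (K : Type v) (ob : K → C), (∀ s, IsFP (ob s)) ∧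
      (∀ T : C, IsFP T → ∃ s, Nonempty (ob s ≅ T)) := by
  haveI := hC.2.1
  refine ⟨SmallModel (ObjectProperty.FullSubcategory fun X : C => IsFP X),
    fun s => ((equivSmallModel _).inverse.obj s).obj,
    fun s => ((equivSmallModel _).inverse.obj s).property, ?_⟩
  intro T hT
  refine ⟨(equivSmallModel _).functor.obj ⟨T, hT⟩, ⟨?_⟩⟩
  exact (ObjectProperty.ι _).mapIso ((equivSmallModel _).unitIso.symm.app ⟨T, hT⟩)

/-- Image factorization of a coalgebra morphism into `X` through a subcoalgebra
with finitely generated carrier. -/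
lemma imagify {H : C ⥤ C} (hC : IsLFP C) (hm : PreservesNonemptyMonos H)
    {X Q : Endofunctor.Coalgebra H} (q : Q ⟶ X) (hQ : IsFG Q.V) :
    ∃ (R : Endofunctor.Coalgebra H) (ρ : R ⟶ X) (e : Q.V ⟶ R.V),
      Mono ρ.f ∧ IsFG R.V ∧ Epi e ∧ e ≫ ρ.f = q.f := by
  haveI := hC.1
  obtain ⟨K, ob, hobFP, hrep⟩ := skeleton hC
  set r0 : Q.V ⟶ X.V := q.f with hr0
  have hmono : Mono (rω ob r0) := rω_mono ob r0 hC hrep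
  have hfg : IsFG (Vω ob r0) := Vω_fg ob r0 hobFP hQ
  by_cases hstrict : IsStrictInitial (Vω ob r0)
  · obtain ⟨hI⟩ := hstrict.1
    refine ⟨⟨Vω ob r0, hI.to _⟩, ⟨rω ob r0, hI.hom_ext _ _⟩, eω ob r0,
      hmono, hfg, inferInstance, eω_rω ob r0⟩
  · haveI hHmono : Mono (H.map (rω ob r0)) := hm _ hmono hstrict
    set P : ∀ n, (tV ob r0 n ⟶ H.obj (Vω ob r0)) → Prop :=
      fun n d => d ≫ H.map (rω ob r0) = tr ob r0 n ≫ X.str with hPdef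
    have hP0 : P 0 (Q.str ≫ H.map (eω ob r0)) := by
      show (Q.str ≫ H.map (eω ob r0)) ≫ H.map (rω ob r0) = tr ob r0 0 ≫ X.str
      rw [Category.assoc, ← H.map_comp, eω_rω]
      exact q.h
    have hkill : ∀ n (u : tV ob r0 n ⟶ H.obj (Vω ob r0)), P n u →
        ∀ (p : PairIdx ob (tr ob r0 n)), p.a ≫ u = p.b ≫ u := by
      intro n u hu p
      replace hu : u ≫ H.map (rω ob r0) = tr ob r0 n ≫ X.str := hu
      rw [← cancel_mono (H.map (rω ob r0)), Category.assoc, Category.assoc, hu,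
        ← Category.assoc, ← Category.assoc, p.hab]
    have hPsucc : ∀ n (u : tV ob r0 n ⟶ H.obj (Vω ob r0)), P n u →
        ∀ (u' : tV ob r0 (n+1) ⟶ H.obj (Vω ob r0)), tπ ob r0 n ≫ u' = u → P (n+1) u' := by
      intro n u hu u' hu'
      replace hu : u ≫ H.map (rω ob r0) = tr ob r0 n ≫ X.str := hu
      show u' ≫ H.map (rω ob r0) = tr ob r0 (n+1) ≫ X.str
      rw [← cancel_epi (tπ ob r0 n), ← Category.assoc, hu', hu, ← Category.assoc, tπ_tr]
    set d : Vω ob r0 ⟶ H.obj (Vω ob r0) :=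
      towerLiftDesc ob r0 (Q.str ≫ H.map (eω ob r0)) P hP0 hkill hPsucc with hd
    have hrhom : d ≫ H.map (rω ob r0) = rω ob r0 ≫ X.str := by
      apply chain_hom_ext
      intro n
      erw [← Category.assoc, hd, chainι_towerLiftDesc]
      have h2 : (towerLift ob r0 (Q.str ≫ H.map (eω ob r0)) P hP0 hkill hPsucc n).1 ≫
          H.map (rω ob r0) = tr ob r0 n ≫ X.str :=
        (towerLift ob r0 (Q.str ≫ H.map (eω ob r0)) P hP0 hkill hPsucc n).2
      erw [h2, ← Category.assoc, chainι_rω]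
    exact ⟨⟨Vω ob r0, d⟩, ⟨rω ob r0, hrhom⟩, eω ob r0,
      hmono, hfg, inferInstance, eω_rω ob r0⟩

end ImagifyFinal


section Sol

variable [HasBinaryCoproducts C] {H : C ⥤ C}

/-- being a coalgebra-to-algebra morphism -/
def IsSol (A : Endofunctor.Algebra H) (W : Endofunctor.Coalgebra H) (s : W.V ⟶ A.a) : Prop :=
  s = W.str ≫ H.map s ≫ A.str

lemma isSol_unique {A : Endofunctor.Algebra H} (hA : IsFGIterative H A)
    (W : Endofunctor.Coalgebra H) (hW : IsFG W.V) :
    ∃! s : W.V ⟶ A.a, IsSol A W s := by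
  have key : ∀ s : W.V ⟶ A.a,
      (W.str ≫ coprod.inl) ≫ coprod.map (H.map s) (𝟙 A.a) ≫ coprod.desc A.str (𝟙 A.a) =
        W.str ≫ H.map s ≫ A.str := by
    intro s
    rw [Category.assoc, coprod.inl_map_assoc, coprod.inl_desc]
  obtain ⟨s, hs, hu⟩ := hA W.V hW (W.str ≫ coprod.inl)
  exact ⟨s, hs.trans (key s), fun y hy => hu y (hy.trans (key y).symm)⟩

lemma isSol_comp {A : Endofunctor.Algebra H} {W W' : Endofunctor.Coalgebra H}
    (k : W ⟶ W') {s' : W'.V ⟶ A.a} (h : IsSol A W' s') : IsSol A W (k.f ≫ s') := by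
  unfold IsSol at h ⊢
  calc k.f ≫ s' = k.f ≫ W'.str ≫ H.map s' ≫ A.str := by rw [← h]
  _ = (W.str ≫ H.map k.f) ≫ H.map s' ≫ A.str := by rw [← Category.assoc, k.h]
  _ = W.str ≫ H.map (k.f ≫ s') ≫ A.str := by rw [Category.assoc]; simp [H.map_comp]

end Sol

section Subs

variable [HasBinaryCoproducts C] {H : C ⥤ C}

/-- A subcoalgebra of `X` with finitely generated carrier. -/
structure Sub (H : C ⥤ C) (X : Endofunctor.Coalgebra H) : Type (max u v) where
  R : Endofunctor.Coalgebra H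
  ρ : R ⟶ X
  mono : Mono ρ.f
  fg : IsFG R.V

def leSub {X : Endofunctor.Coalgebra H} (a b : Sub H X) : Prop :=
  ∃ m : a.R.V ⟶ b.R.V, m ≫ b.ρ.f = a.ρ.f

lemma leSub_refl {X : Endofunctor.Coalgebra H} (a : Sub H X) : leSub a a :=
  ⟨𝟙 _, Category.id_comp _⟩

lemma leSub_trans {X : Endofunctor.Coalgebra H} {a b c : Sub H X}
    (h1 : leSub a b) (h2 : leSub b c) : leSub a c := by
  obtain ⟨m1, hm1⟩ := h1
  obtain ⟨m2, hm2⟩ := h2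
  exact ⟨m1 ≫ m2, by rw [Category.assoc, hm2, hm1]⟩

/-- inclusion maps between subcoalgebras are automatically coalgebra morphisms -/
lemma sub_map_hom (hm : PreservesNonemptyMonos H) {X : Endofunctor.Coalgebra H}
    (a b : Sub H X) (m : a.R.V ⟶ b.R.V) (hmcomp : m ≫ b.ρ.f = a.ρ.f) :
    a.R.str ≫ H.map m = m ≫ b.R.str := by
  by_cases hs : IsStrictInitial b.R.V
  · haveI := hs.2 _ m
    have hIb : IsInitial b.R.V := hs.1.some
    have hIa : IsInitial a.R.V := hIb.ofIso (asIso m).symm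
    exact hIa.hom_ext _ _
  · haveI := b.mono
    haveI : Mono (H.map b.ρ.f) := hm _ b.mono hs
    rw [← cancel_mono (H.map b.ρ.f), Category.assoc, ← H.map_comp, hmcomp, a.ρ.h,
      Category.assoc, b.ρ.h, ← Category.assoc, hmcomp]

/-- coproduct of two coalgebras -/
noncomputable def copCoalg (P Q : Endofunctor.Coalgebra H) : Endofunctor.Coalgebra H :=
  ⟨P.V ⨿ Q.V, coprod.desc (P.str ≫ H.map coprod.inl) (Q.str ≫ H.map coprod.inr)⟩

noncomputable def copHom {P Q X : Endofunctor.Coalgebra H} (hP : P ⟶ X) (hQ : Q ⟶ X) :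
    copCoalg P Q ⟶ X where
  f := coprod.desc hP.f hQ.f
  h := by
    apply coprod.hom_ext
    · simp only [copCoalg, coprod.inl_desc_assoc, Category.assoc, ← H.map_comp,
        coprod.inl_desc]
      exact hP.h
    · simp only [copCoalg, coprod.inr_desc_assoc, Category.assoc, ← H.map_comp,
        coprod.inr_desc]
      exact hQ.h

lemma unionSub_exists (hC : IsLFP C) (hm : PreservesNonemptyMonos H)
    {X : Endofunctor.Coalgebra H} (a b : Sub H X) :
    ∃ w : Sub H X, leSub a w ∧ leSub b w := by
  obtain ⟨R, ρ, e, mono, fg, epi, hcomp⟩ :=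
    imagify hC hm (copHom a.ρ b.ρ) (fg_coprod a.fg b.fg)
  refine ⟨⟨R, ρ, mono, fg⟩, ⟨coprod.inl ≫ e, ?_⟩, ⟨coprod.inr ≫ e, ?_⟩⟩
  · erw [Category.assoc, hcomp]
    exact coprod.inl_desc _ _
  · erw [Category.assoc, hcomp]
    exact coprod.inr_desc _ _

noncomputable def unionSub (hC : IsLFP C) (hm : PreservesNonemptyMonos H)
    {X : Endofunctor.Coalgebra H} (a b : Sub H X) : Sub H X :=
  (unionSub_exists hC hm a b).choose

lemma unionSub_le₁ (hC : IsLFP C) (hm : PreservesNonemptyMonos H)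
    {X : Endofunctor.Coalgebra H} (a b : Sub H X) : leSub a (unionSub hC hm a b) :=
  (unionSub_exists hC hm a b).choose_spec.1

lemma unionSub_le₂ (hC : IsLFP C) (hm : PreservesNonemptyMonos H)
    {X : Endofunctor.Coalgebra H} (a b : Sub H X) : leSub b (unionSub hC hm a b) :=
  (unionSub_exists hC hm a b).choose_spec.2

end Subs

/-- binary trees over `J`, used as a small directed index for subcoalgebras -/
inductive Tr (J : Type v) : Type v
  | leaf : J → Tr J
  | node : Tr J → Tr J → Tr J

def Tr.elim {J : Type v} {β : Sort*} (L : J → β) (N : β → β → β) : Tr J → β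
  | .leaf j => L j
  | .node a b => N (Tr.elim L N a) (Tr.elim L N b)


end LFF17

open LFF17

open LFF in
/-- Every lfg coalgebra admits a unique coalgebra-to-algebra morphism into any
fg-iterative algebra. -/
theorem stmt17 {C : Type u} [Category.{v} C] [HasBinaryCoproducts C] (hC : IsLFP C)
    (H : C ⥤ C) (hfin : IsFinitary H) (hm : PreservesNonemptyMonos H)
    (A : Endofunctor.Algebra H) (hA : IsFGIterative H A)
    (X : Endofunctor.Coalgebra H) (hX : IsLFGCoalgebra H X) :
    ∃! u : X.V ⟶ A.a, u = X.str ≫ H.map u ≫ A.str := by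
  haveI := hC.1
  obtain ⟨J, _, _, F, c, hFP, ⟨hc⟩, ⟨φ⟩⟩ := hC.2.2 X.V
  haveI : Nonempty J := IsFiltered.nonempty
  -- for each index, choose a coalgebra through which the colimit leg factors,
  -- and replace it by its image, a subcoalgebra of X with fg carrier
  have leafdata : ∀ j : J, ∃ (P : Endofunctor.Coalgebra H) (h : P ⟶ X)
      (f' : F.obj j ⟶ P.V), IsFG P.V ∧ f' ≫ h.f = c.ι.app j ≫ φ.hom :=
    fun j => hX _ (isFG_of_isFP (hFP j)) _
  choose P hP f' hPfg hPfac using leafdata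
  have leafimg : ∀ j : J, ∃ (R : Endofunctor.Coalgebra H) (ρ : R ⟶ X)
      (e : (P j).V ⟶ R.V), Mono ρ.f ∧ IsFG R.V ∧ Epi e ∧ e ≫ ρ.f = (hP j).f :=
    fun j => imagify hC hm (hP j) (hPfg j)
  choose R ρ e hRmono hRfg hRepi hRcomp using leafimg
  -- the directed family of subcoalgebras, indexed by binary trees
  set L : J → Sub H X := fun j => ⟨R j, ρ j, hRmono j, hRfg j⟩ with hL
  set St : Tr J → Sub H X := Tr.elim L (fun a b => unionSub hC hm a b) with hSt
  have hStleaf : ∀ j, St (.leaf j) = L j := fun j => rfl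
  have hStnode : ∀ t t', St (.node t t') = unionSub hC hm (St t) (St t') := fun t t' => rfl
  set mm : ∀ j : J, F.obj j ⟶ (St (.leaf j)).R.V := fun j => f' j ≫ e j with hmm
  have hmfac : ∀ j, mm j ≫ (St (.leaf j)).ρ.f = c.ι.app j ≫ φ.hom := by
    intro j
    rw [hmm]
    show (f' j ≫ e j) ≫ (ρ j).f = c.ι.app j ≫ φ.hom
    rw [Category.assoc, hRcomp j, hPfac j]
  letI pre : Preorder (Tr J) :=
    { le := fun t t' => leSub (St t) (St t')
      le_refl := fun t => leSub_refl _
      le_trans := fun a b d hab hbd => leSub_trans hab hbd }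
  haveI : IsDirected (Tr J) (· ≤ ·) :=
    ⟨fun a b => ⟨a.node b, unionSub_le₁ hC hm (St a) (St b), unionSub_le₂ hC hm (St a) (St b)⟩⟩
  haveI : Nonempty (Tr J) := ⟨.leaf (Classical.arbitrary J)⟩
  -- the carrier diagram of the directed family
  set D : Tr J ⥤ C :=
    { obj := fun t => (St t).R.V
      map := fun {t t'} h => (leOfHom h).choose
      map_id := fun t => by
        haveI := (St t).mono
        rw [← cancel_mono (St t).ρ.f, (leOfHom (𝟙 t)).choose_spec, Category.id_comp]
      map_comp := fun {a b d} fab fbd => by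
        haveI := (St d).mono
        rw [← cancel_mono (St d).ρ.f, (leOfHom (fab ≫ fbd)).choose_spec, Category.assoc,
          (leOfHom fbd).choose_spec, (leOfHom fab).choose_spec] } with hD
  have hDmap : ∀ {t t' : Tr J} (h : t ⟶ t'), D.map h ≫ (St t').ρ.f = (St t).ρ.f :=
    fun {t t'} h => (leOfHom h).choose_spec
  -- the comparison map to X.V
  set comp : colimit D ⟶ X.V := colimit.desc D
    { pt := X.V
      ι := { app := fun t => (St t).ρ.f
             naturality := fun t t' h => by
               dsimp
               rw [Category.comp_id]
               exact hDmap h } } with hcomp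
  have hcompι : ∀ t, colimit.ι D t ≫ comp = (St t).ρ.f := fun t => colimit.ι_desc _ _
  -- the map back from the presentation of X.V
  have hψnat : ∀ {i j : J} (fij : i ⟶ j),
      F.map fij ≫ mm j ≫ colimit.ι D (.leaf j) = mm i ≫ colimit.ι D (.leaf i) := by
    intro i j fij
    have h1 : (Tr.leaf i : Tr J) ⟶ (Tr.leaf i).node (.leaf j) :=
      homOfLE (unionSub_le₁ hC hm (St (.leaf i)) (St (.leaf j)))
    have h2 : (Tr.leaf j : Tr J) ⟶ (Tr.leaf i).node (.leaf j) :=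
      homOfLE (unionSub_le₂ hC hm (St (.leaf i)) (St (.leaf j)))
    haveI := (St ((Tr.leaf i).node (.leaf j))).mono
    rw [← colimit.w D h1, ← colimit.w D h2]
    rw [show F.map fij ≫ mm j ≫ D.map h2 ≫ colimit.ι D ((Tr.leaf i).node (.leaf j)) =
      (F.map fij ≫ mm j ≫ D.map h2) ≫ colimit.ι D ((Tr.leaf i).node (.leaf j)) by
        simp only [Category.assoc],
      show mm i ≫ D.map h1 ≫ colimit.ι D ((Tr.leaf i).node (.leaf j)) =
      (mm i ≫ D.map h1) ≫ colimit.ι D ((Tr.leaf i).node (.leaf j)) by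
        simp only [Category.assoc]]
    congr 1
    rw [← cancel_mono (St ((Tr.leaf i).node (.leaf j))).ρ.f]
    simp only [Category.assoc]
    rw [hDmap h2, hDmap h1, hmfac, hmfac, ← Category.assoc, c.w fij]
  set ψ : c.pt ⟶ colimit D := hc.desc
    { pt := colimit D
      ι := { app := fun j => mm j ≫ colimit.ι D (.leaf j)
             naturality := fun i j fij => by
               dsimp
               rw [Category.comp_id]
               exact hψnat fij } } with hψdef
  have hψ : ∀ j, c.ι.app j ≫ ψ = mm j ≫ colimit.ι D (.leaf j) := fun j => hc.fac _ j
  have hψcomp : ψ ≫ comp = φ.hom := by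
    apply hc.hom_ext
    intro j
    rw [← Category.assoc, hψ j, Category.assoc, hcompι, hmfac]
  -- comp is mono
  have hcmono : Mono comp := by
    apply sep_mono hC
    intro T hT a b hab
    obtain ⟨t1, va, hva⟩ := fp_factor hT (colimit.isColimit D) a
    obtain ⟨t2, vb, hvb⟩ := fp_factor hT (colimit.isColimit D) b
    have h1 : (t1 : Tr J) ⟶ t1.node t2 := homOfLE (unionSub_le₁ hC hm (St t1) (St t2))
    have h2 : (t2 : Tr J) ⟶ t1.node t2 := homOfLE (unionSub_le₂ hC hm (St t1) (St t2))
    haveI := (St (t1.node t2)).mono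
    have ha2 : (va ≫ D.map h1) ≫ colimit.ι D (t1.node t2) = a := by
      rw [Category.assoc, colimit.w D h1]
      exact hva
    have hb2 : (vb ≫ D.map h2) ≫ colimit.ι D (t1.node t2) = b := by
      rw [Category.assoc, colimit.w D h2]
      exact hvb
    have heq : va ≫ D.map h1 = vb ≫ D.map h2 := by
      rw [← cancel_mono (St (t1.node t2)).ρ.f]
      rw [← hcompι (t1.node t2), ← Category.assoc, ← Category.assoc, ha2, hb2]
      exact hab
    rw [← ha2, ← hb2, heq]
  -- comp is split epi with section φ.inv ≫ ψ, hence iso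
  have hsec : (φ.inv ≫ ψ) ≫ comp = 𝟙 X.V := by
    rw [Category.assoc, hψcomp, φ.inv_hom_id]
  have hret : comp ≫ φ.inv ≫ ψ = 𝟙 (colimit D) := by
    rw [← cancel_mono comp, Category.assoc, Category.assoc, hψcomp, φ.inv_hom_id,
      Category.comp_id, Category.id_comp]
  -- unique solutions on each subcoalgebra
  have soluniq : ∀ t : Tr J, ∃! s : (St t).R.V ⟶ A.a, IsSol A (St t).R s :=
    fun t => isSol_unique hA _ (St t).fg
  choose sol hsol using soluniq
  have hsolnat : ∀ {t t' : Tr J} (h : t ⟶ t'), D.map h ≫ sol t' = sol t := by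
    intro t t' h
    apply (hsol t).2
    exact isSol_comp (⟨D.map h, sub_map_hom hm (St t) (St t') (D.map h) (hDmap h)⟩ :
      (St t).R ⟶ (St t').R) (hsol t').1
  set tA : colimit D ⟶ A.a := colimit.desc D
    { pt := A.a
      ι := { app := sol
             naturality := fun t t' h => by
               dsimp
               rw [Category.comp_id]
               exact hsolnat h } } with htAdef
  have htA : ∀ t, colimit.ι D t ≫ tA = sol t := fun t => colimit.ι_desc _ _
  -- the solution on X
  set u : X.V ⟶ A.a := (φ.inv ≫ ψ) ≫ tA with hu
  have hcompu : comp ≫ u = tA := by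
    rw [hu, ← Category.assoc, hret, Category.id_comp]
  have hρu : ∀ t, (St t).ρ.f ≫ u = sol t := by
    intro t
    rw [← hcompι t, Category.assoc, hcompu, htA]
  -- u is a coalgebra-to-algebra morphism
  have husol : u = X.str ≫ H.map u ≫ A.str := by
    have hkey : comp ≫ u = comp ≫ X.str ≫ H.map u ≫ A.str := by
      apply colimit.hom_ext
      intro t
      have e1 : colimit.ι D t ≫ comp ≫ u = (St t).ρ.f ≫ u := by
        rw [← Category.assoc, hcompι]
      have e2 : colimit.ι D t ≫ comp ≫ X.str ≫ H.map u ≫ A.str =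
          (St t).ρ.f ≫ X.str ≫ H.map u ≫ A.str := by
        rw [← Category.assoc, hcompι]
      rw [e1, e2, hρu t, ← Category.assoc, ← (St t).ρ.h, Category.assoc]
      have e3 : H.map (St t).ρ.f ≫ H.map u ≫ A.str = H.map (sol t) ≫ A.str := by
        rw [← Category.assoc, ← H.map_comp, hρu t]
      rw [e3]
      exact (hsol t).1
    calc u = 𝟙 X.V ≫ u := (Category.id_comp u).symm
    _ = ((φ.inv ≫ ψ) ≫ comp) ≫ u := by rw [hsec]
    _ = (φ.inv ≫ ψ) ≫ comp ≫ u := Category.assoc _ _ _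
    _ = (φ.inv ≫ ψ) ≫ comp ≫ X.str ≫ H.map u ≫ A.str := by rw [hkey]
    _ = ((φ.inv ≫ ψ) ≫ comp) ≫ X.str ≫ H.map u ≫ A.str := (Category.assoc _ _ _).symm
    _ = X.str ≫ H.map u ≫ A.str := by rw [hsec, Category.id_comp]
  refine ⟨u, husol, ?_⟩
  intro y hy
  have hρy : ∀ t, (St t).ρ.f ≫ y = sol t := by
    intro t
    apply (hsol t).2
    exact isSol_comp ((St t).ρ) (show IsSol A X y from hy)
  have hyu : comp ≫ y = comp ≫ u := by
    apply colimit.hom_ext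
    intro t
    rw [← Category.assoc, hcompι, hρy t, ← Category.assoc, hcompι, hρu t]
  calc y = 𝟙 X.V ≫ y := (Category.id_comp y).symm
  _ = ((φ.inv ≫ ψ) ≫ comp) ≫ y := by rw [hsec]
  _ = (φ.inv ≫ ψ) ≫ comp ≫ y := Category.assoc _ _ _
  _ = (φ.inv ≫ ψ) ≫ comp ≫ u := by rw [hyu]
  _ = ((φ.inv ≫ ψ) ≫ comp) ≫ u := (Category.assoc _ _ _).symm
  _ = u := by rw [hsec, Category.id_comp]
end

section
/- Assume additionally that every finitely presentable object of C is a strong quotient of a finitely presentable projective object and that H preserves strong epimorphisms. Then every H-coalgebra with finitely generated carrier is a strong quotient (in Coalg H) of a coalgebra with finitely presentable carrier. -/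
open CategoryTheory CategoryTheory.Limits

universe v u

/-- A `Type v` copy of the natural numbers, used as a chain index category. -/
structure NatIdx : Type v where
  val : ℕ

instance : LinearOrder NatIdx.{v} :=
  LinearOrder.lift' NatIdx.val fun a b h => by cases a; cases b; cases h; rfl

namespace LFFAux

variable {C : Type u} [Category.{v} C]

instance : Nonempty NatIdx.{v} := ⟨⟨0⟩⟩

example : IsFiltered NatIdx.{v} := inferInstance

section Step

variable [HasColimits C] {S : Type v} (T : S → C)

/-- Index type of test pairs out of the family `T` that are equalized by `y`. -/
def PairIdx {Y X : C} (y : Y ⟶ X) : Type v :=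
  Σ s : S, { p : (T s ⟶ Y) × (T s ⟶ Y) // p.1 ≫ y = p.2 ≫ y }

variable {Y X : C}

noncomputable def par₁ (y : Y ⟶ X) : (∐ fun k : PairIdx T y => T k.1) ⟶ Y :=
  Sigma.desc fun k => k.2.1.1

noncomputable def par₂ (y : Y ⟶ X) : (∐ fun k : PairIdx T y => T k.1) ⟶ Y :=
  Sigma.desc fun k => k.2.1.2

noncomputable def stepObj (y : Y ⟶ X) : C := coequalizer (par₁ T y) (par₂ T y)

noncomputable def stepπ (y : Y ⟶ X) : Y ⟶ stepObj T y := coequalizer.π _ _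

lemma par_comp (y : Y ⟶ X) : par₁ T y ≫ y = par₂ T y ≫ y := by
  apply colimit.hom_ext
  intro ⟨k⟩
  simp [par₁, par₂, k.2.2]

noncomputable def stepTo (y : Y ⟶ X) : stepObj T y ⟶ X :=
  coequalizer.desc y (par_comp T y)

@[simp] lemma stepπ_stepTo (y : Y ⟶ X) : stepπ T y ≫ stepTo T y = y :=
  coequalizer.π_desc _ _

instance (y : Y ⟶ X) : IsRegularEpi (stepπ T y) := ⟨⟨coequalizerRegular _ _⟩⟩

instance (y : Y ⟶ X) : StrongEpi (stepπ T y) := inferInstance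

lemma stepπ_eq (y : Y ⟶ X) {s : S} (u v : T s ⟶ Y) (h : u ≫ y = v ≫ y) :
    u ≫ stepπ T y = v ≫ stepπ T y := by
  have hc := coequalizer.condition (par₁ T y) (par₂ T y)
  have h2 := congrArg (fun t => Sigma.ι (fun k : PairIdx T y => T k.1) ⟨s, ⟨(u, v), h⟩⟩ ≫ t) hc
  simp [par₁, par₂, stepπ] at h2
  exact h2

section Chain

variable {A X : C} (f : A ⟶ X)

noncomputable def chain : ℕ → Σ' (Y : C), Y ⟶ X
  | 0 => ⟨A, f⟩
  | n + 1 => ⟨stepObj T (chain n).2, stepTo T (chain n).2⟩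

noncomputable def chainObj (n : ℕ) : C := (chain T f n).1

noncomputable def chainTo (n : ℕ) : chainObj T f n ⟶ X := (chain T f n).2

lemma chain_succ (n : ℕ) :
    chain T f (n + 1) = ⟨stepObj T (chainTo T f n), stepTo T (chainTo T f n)⟩ := rfl

noncomputable def chainStep (n : ℕ) : chainObj T f n ⟶ chainObj T f (n + 1) :=
  stepπ T (chainTo T f n)

@[simp] lemma chainTo_zero : chainTo T f 0 = f := rfl

@[simp] lemma chainStep_chainTo (n : ℕ) :
    chainStep T f n ≫ chainTo T f (n + 1) = chainTo T f n :=
  stepπ_stepTo T (chainTo T f n)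

instance (n : ℕ) : StrongEpi (chainStep T f n) := by
  unfold chainStep; exact (inferInstance : StrongEpi (stepπ T (chainTo T f n)))

noncomputable def chainFunctor : NatIdx.{v} ⥤ C :=
  (Monotone.functor (f := fun n : NatIdx.{v} => n.val) (fun _ _ h => h)) ⋙
    Functor.ofSequence (chainStep T f)

@[simp] lemma chainFunctor_obj (n : NatIdx.{v}) :
    (chainFunctor T f).obj n = chainObj T f n.val := rfl

lemma chainFunctor_map_succ (n : ℕ) :
    (chainFunctor T f).map
      (homOfLE (show (⟨n⟩ : NatIdx.{v}) ≤ ⟨n + 1⟩ from Nat.le_succ n)) =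
      chainStep T f n := by
  have h1 : (Monotone.functor (f := fun k : NatIdx.{v} => k.val)
        (fun _ _ h => h)).map
        (homOfLE (show (⟨n⟩ : NatIdx.{v}) ≤ ⟨n + 1⟩ from Nat.le_succ n)) =
      homOfLE (Nat.le_succ n) :=
    Subsingleton.elim _ _
  simp only [chainFunctor, Functor.comp_map, h1]
  exact Functor.ofSequence_map_homOfLE_succ _ n

lemma chainFunctor_map_comp_chainTo {n m : ℕ} (h : n ≤ m) :
    (chainFunctor T f).map (homOfLE (show (⟨n⟩ : NatIdx.{v}) ≤ ⟨m⟩ from h)) ≫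
      chainTo T f m = chainTo T f n := by
  induction m, h using Nat.le_induction with
  | base =>
      rw [Subsingleton.elim (homOfLE _) (𝟙 (⟨n⟩ : NatIdx.{v}))]
      simp
  | succ m hm ih =>
      rw [Subsingleton.elim
        (homOfLE (show (⟨n⟩ : NatIdx.{v}) ≤ ⟨m + 1⟩ from hm.trans (Nat.le_succ m)))
        (homOfLE (show (⟨n⟩ : NatIdx.{v}) ≤ ⟨m⟩ from hm) ≫
          homOfLE (show (⟨m⟩ : NatIdx.{v}) ≤ ⟨m + 1⟩ from Nat.le_succ m))]
      erw [Functor.map_comp, Category.assoc, chainFunctor_map_succ, chainStep_chainTo, ih]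

noncomputable def chainCocone : Cocone (chainFunctor T f) where
  pt := X
  ι :=
    { app := fun n => chainTo T f n.val
      naturality := fun n m g => by
        have h : n.val ≤ m.val := (leOfHom g : n ≤ m)
        rw [Subsingleton.elim g
          (homOfLE (show (⟨n.val⟩ : NatIdx.{v}) ≤ ⟨m.val⟩ from h))]
        simpa using chainFunctor_map_comp_chainTo T f h }

noncomputable def factObj : C := colimit (chainFunctor T f)

noncomputable def factι (n : ℕ) : chainObj T f n ⟶ factObj T f :=
  colimit.ι (chainFunctor T f) ⟨n⟩

noncomputable def facte : A ⟶ factObj T f := factι T f 0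

noncomputable def factm : factObj T f ⟶ X := colimit.desc _ (chainCocone T f)

@[simp] lemma factι_factm (n : ℕ) : factι T f n ≫ factm T f = chainTo T f n :=
  colimit.ι_desc _ _

@[simp] lemma facte_factm : facte T f ≫ factm T f = f := factι_factm T f 0

lemma chainStep_factι (n : ℕ) :
    chainStep T f n ≫ factι T f (n + 1) = factι T f n := by
  rw [← chainFunctor_map_succ T f n]
  exact colimit.w _ _

lemma epi_facte : Epi (facte T f) := by
  constructor
  intro Z a b h
  apply colimit.hom_ext
  intro ⟨n⟩
  show factι T f n ≫ a = factι T f n ≫ b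
  induction n with
  | zero => exact h
  | succ n ih =>
      rw [← chainStep_factι T f n] at ih
      rw [Category.assoc, Category.assoc] at ih
      exact (cancel_epi (chainStep T f n)).1 ih

lemma strongEpi_facte : StrongEpi (facte T f) := by
  have := epi_facte T f
  refine StrongEpi.mk' ?_
  intro U W z hz g g' sq
  -- build lifts along the chain
  let P : ℕ → Type _ := fun n => { l : chainObj T f n ⟶ U // l ≫ z = factι T f n ≫ g' }
  have step : ∀ n : ℕ, ∀ p : P n,
      { l : P (n + 1) // chainStep T f n ≫ l.1 = p.1 } := by
    intro n p
    haveI : Mono z := hz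
    have w : p.1 ≫ z = chainStep T f n ≫ factι T f (n + 1) ≫ g' := by
      rw [p.2, ← Category.assoc, chainStep_factι]
    have sq' : CommSq p.1 (chainStep T f n) z (factι T f (n + 1) ≫ g') := ⟨w⟩
    exact ⟨⟨sq'.lift, sq'.fac_right⟩, sq'.fac_left⟩
  let L : ∀ n : ℕ, P n := fun n =>
    Nat.rec ⟨g, by exact sq.w⟩ (fun n p => (step n p).1) n
  have hLstep : ∀ n : ℕ, chainStep T f n ≫ (L (n + 1)).1 = (L n).1 := fun n =>
    (step n (L n)).2
  have hLnat : ∀ {n m : ℕ} (h : n ≤ m),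
      (chainFunctor T f).map (homOfLE (show (⟨n⟩ : NatIdx.{v}) ≤ ⟨m⟩ from h)) ≫
        (L m).1 = (L n).1 := by
    intro n m h
    induction m, h using Nat.le_induction with
    | base =>
        rw [Subsingleton.elim (homOfLE _) (𝟙 (⟨n⟩ : NatIdx.{v}))]
        simp
    | succ m hm ih =>
        rw [Subsingleton.elim
          (homOfLE (show (⟨n⟩ : NatIdx.{v}) ≤ ⟨m + 1⟩ from hm.trans (Nat.le_succ m)))
          (homOfLE (show (⟨n⟩ : NatIdx.{v}) ≤ ⟨m⟩ from hm) ≫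
            homOfLE (show (⟨m⟩ : NatIdx.{v}) ≤ ⟨m + 1⟩ from Nat.le_succ m))]
        erw [Functor.map_comp, Category.assoc, chainFunctor_map_succ, hLstep, ih]
  let cU : Cocone (chainFunctor T f) :=
    { pt := U
      ι :=
        { app := fun n => (L n.val).1
          naturality := fun n m gnm => by
            have h : n.val ≤ m.val := (leOfHom gnm : n ≤ m)
            rw [Subsingleton.elim gnm
              (homOfLE (show (⟨n.val⟩ : NatIdx.{v}) ≤ ⟨m.val⟩ from h))]
            simpa using hLnat h } }
  refine ⟨⟨⟨colimit.desc _ cU, ?_, ?_⟩⟩⟩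
  · show factι T f 0 ≫ colimit.desc _ cU = g
    erw [factι, colimit.ι_desc]
    rfl
  · apply colimit.hom_ext
    intro ⟨n⟩
    have h1 : colimit.ι (chainFunctor T f) ⟨n⟩ ≫ colimit.desc _ cU = (L n).1 :=
      colimit.ι_desc _ _
    erw [← Category.assoc, h1, (L n).2]
    rfl

lemma factm_mono_fp (hfam : ∀ X' : C, LFF.IsFP X' → ∃ s : S, Nonempty (X' ≅ T s))
    {T' : C} (hT' : LFF.IsFP T') (u v : T' ⟶ factObj T f)
    (huv : u ≫ factm T f = v ≫ factm T f) : u = v := by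
  obtain ⟨hcolim⟩ :=
    hT' NatIdx.{v} (chainFunctor T f) (colimit.cocone _) ⟨colimit.isColimit _⟩
  obtain ⟨⟨n₁⟩, u', hu'⟩ := Types.jointly_surjective_of_isColimit hcolim u
  obtain ⟨⟨n₂⟩, v', hv'⟩ := Types.jointly_surjective_of_isColimit hcolim v
  -- interpret
  have hu : u' ≫ factι T f n₁ = u := hu'
  have hv : v' ≫ factι T f n₂ = v := hv'
  -- bump to a common stage
  set n := max n₁ n₂ with hn
  have hu2 : ∃ w : T' ⟶ chainObj T f n, w ≫ factι T f n = u := by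
    refine ⟨u' ≫ (chainFunctor T f).map
      (homOfLE (show (⟨n₁⟩ : NatIdx.{v}) ≤ ⟨n⟩ from (Nat.le_max_left n₁ n₂ : n₁ ≤ n))), ?_⟩
    erw [Category.assoc]
    show u' ≫ _ ≫ colimit.ι (chainFunctor T f) ⟨n⟩ = u
    rw [colimit.w]
    exact hu
  obtain ⟨u'', hu2⟩ := hu2
  have hv2 : ∃ w : T' ⟶ chainObj T f n, w ≫ factι T f n = v := by
    refine ⟨v' ≫ (chainFunctor T f).map
      (homOfLE (show (⟨n₂⟩ : NatIdx.{v}) ≤ ⟨n⟩ from (Nat.le_max_right n₁ n₂ : n₂ ≤ n))), ?_⟩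
    erw [Category.assoc]
    show v' ≫ _ ≫ colimit.ι (chainFunctor T f) ⟨n⟩ = v
    rw [colimit.w]
    exact hv
  obtain ⟨v'', hv2⟩ := hv2
  have heq : u'' ≫ chainTo T f n = v'' ≫ chainTo T f n := by
    rw [← factι_factm T f n, ← Category.assoc, ← Category.assoc, hu2, hv2, huv]
  obtain ⟨s, ⟨ψ⟩⟩ := hfam T' hT'
  have hstep : u'' ≫ chainStep T f n = v'' ≫ chainStep T f n := by
    have := stepπ_eq T (chainTo T f n) (ψ.inv ≫ u'') (ψ.inv ≫ v'')
      (by rw [Category.assoc, Category.assoc, heq])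
    have h2 := congrArg (fun t => ψ.hom ≫ t) this
    simp [chainStep] at h2
    exact h2
  rw [← hu2, ← hv2, ← chainStep_factι T f n, ← Category.assoc, ← Category.assoc, hstep]

lemma factm_mono (hfam : ∀ X' : C, LFF.IsFP X' → ∃ s : S, Nonempty (X' ≅ T s))
    (hpres : ∀ Z : C, ∃ (J : Type v) (_ : SmallCategory J) (_ : IsFiltered J)
      (F : J ⥤ C) (c : Cocone F),
        (∀ j, LFF.IsFP (F.obj j)) ∧ Nonempty (IsColimit c) ∧ Nonempty (c.pt ≅ Z)) :
    Mono (factm T f) := by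
  constructor
  intro Z u v huv
  obtain ⟨J, hJ, hJf, F, c, hfp, ⟨hc⟩, ⟨ψ⟩⟩ := hpres Z
  have h1 : ∀ j, (c.ι.app j ≫ ψ.hom) ≫ u = (c.ι.app j ≫ ψ.hom) ≫ v := by
    intro j
    apply factm_mono_fp T f hfam (hfp j)
    simp only [Category.assoc, huv]
  have h2 : ψ.hom ≫ u = ψ.hom ≫ v :=
    hc.hom_ext fun j => by simpa using h1 j
  exact (cancel_epi ψ.hom).1 h2

end Chain

end Step

theorem exists_fact (hC : LFF.IsLFP C) {A X : C} (f : A ⟶ X) :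
    ∃ (I : C) (e : A ⟶ I) (m : I ⟶ X), StrongEpi e ∧ Mono m ∧ e ≫ m = f := by
  obtain ⟨hcol, hsmall, hpres⟩ := hC
  obtain ⟨S, hS, ⟨E⟩⟩ := hsmall.equiv_smallCategory
  let T : S → C := fun s => (E.inverse.obj s).obj
  have hfam : ∀ X' : C, LFF.IsFP X' → ∃ s : S, Nonempty (X' ≅ T s) := fun X' h =>
    ⟨E.functor.obj ⟨X', h⟩,
      ⟨(ObjectProperty.ι _).mapIso (E.unitIso.app ⟨X', h⟩)⟩⟩
  exact ⟨factObj T f, facte T f, factm T f, strongEpi_facte T f,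
    factm_mono T f hfam hpres, facte_factm T f⟩

theorem exists_fp_cover (hC : LFF.IsLFP C) {X : C} (hX : LFF.IsFG X) :
    ∃ (V : C) (q : V ⟶ X), LFF.IsFP V ∧ StrongEpi q := by
  obtain ⟨J, hJ, hJf, F, c, hfp, ⟨hc⟩, ⟨ψ⟩⟩ := hC.2.2 X
  haveI := hC.1
  let c' : Cocone F :=
    { pt := X
      ι :=
        { app := fun j => c.ι.app j ≫ ψ.hom
          naturality := fun i j g => by simp } }
  have hc' : IsColimit c' := hc.ofIsoColimit (Cocones.ext ψ fun j => rfl)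
  choose Iobj e m he hm hcomm using fun j => exists_fact hC (c.ι.app j ≫ ψ.hom)
  have hd : ∀ ⦃i j : J⦄ (g : i ⟶ j), ∃ d : Iobj i ⟶ Iobj j,
      e i ≫ d = F.map g ≫ e j ∧ d ≫ m j = m i := by
    intro i j g
    haveI := he i; haveI := hm j
    have w : (F.map g ≫ e j) ≫ m j = e i ≫ m i := by
      rw [Category.assoc, hcomm j, hcomm i, ← Category.assoc, c.w]
    have sq : CommSq (F.map g ≫ e j) (e i) (m j) (m i) := ⟨w⟩
    exact ⟨sq.lift, sq.fac_left, sq.fac_right⟩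
  choose d hd1 hd2 using hd
  let G : J ⥤ C :=
    { obj := Iobj
      map := fun g => d g
      map_id := fun j => by
        haveI := hm j
        apply (cancel_mono (m j)).1
        rw [hd2, Category.id_comp]
      map_comp := fun {i j k} g g' => by
        haveI := hm k
        apply (cancel_mono (m k)).1
        rw [hd2, Category.assoc, hd2, hd2] }
  have hmono : ∀ ⦃i j : J⦄ (g : i ⟶ j), Mono (G.map g) := by
    intro i j g
    haveI : Mono (d g ≫ m j) := by rw [hd2]; exact hm i
    exact mono_of_mono (d g) (m j)
  let cG : Cocone G :=
    { pt := X
      ι :=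
        { app := fun j => m j
          naturality := fun i j g => by simpa using hd2 g } }
  let sCone : Cocone G → Cocone F := fun s =>
    ⟨s.pt,
      { app := fun j => e j ≫ s.ι.app j
        naturality := fun i j g => by
          have h1 : F.map g ≫ e j ≫ s.ι.app j = e i ≫ s.ι.app i := by
            rw [← Category.assoc, ← hd1 g, Category.assoc]
            congr 1
            exact s.w g
          simpa using h1 }⟩
  have hcG : IsColimit cG := by
    refine
      { desc := fun s => hc'.desc (sCone s)
        fac := fun s j => ?_
        uniq := fun s t h => ?_ }
    · haveI := he j
      apply (cancel_epi (e j)).1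
      show e j ≫ cG.ι.app j ≫ hc'.desc (sCone s) = e j ≫ s.ι.app j
      rw [← Category.assoc]
      show (e j ≫ m j) ≫ _ = _
      rw [hcomm j]
      exact hc'.fac (sCone s) j
    · refine hc'.uniq (sCone s) t fun j => ?_
      show (c.ι.app j ≫ ψ.hom) ≫ t = e j ≫ s.ι.app j
      rw [← hcomm j, Category.assoc]
      have h' : m j ≫ t = s.ι.app j := h j
      rw [h']
  obtain ⟨hcolim⟩ := hX J G hmono cG ⟨hcG⟩
  obtain ⟨j, y, hy⟩ := Types.jointly_surjective_of_isColimit hcolim (𝟙 X)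
  have hy' : y ≫ m j = 𝟙 X := hy
  haveI : IsSplitEpi (m j) := IsSplitEpi.mk' ⟨y, hy'⟩
  haveI := he j
  haveI : StrongEpi (m j) := inferInstance
  exact ⟨F.obj j, e j ≫ m j, hfp j, strongEpi_comp _ _⟩

end LFFAux

open LFF in
/-- An object is projective (w.r.t. strong epis) if morphisms out of it lift along
strong epimorphisms. -/
def LFF.IsStrongProjective {C : Type u} [Category.{v} C] (P : C) : Prop :=
  ∀ ⦃A B : C⦄ (e : A ⟶ B), StrongEpi e → ∀ f : P ⟶ B, ∃ f' : P ⟶ A, f' ≫ e = f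

open LFF in
/-- If every fp object is a strong quotient of an fp projective object and `H`
preserves strong epis, then every coalgebra with fg carrier is a strong quotient
(in the category of coalgebras) of a coalgebra with fp carrier. -/
theorem stmt19 {C : Type u} [Category.{v} C] (hC : IsLFP C)
    (H : C ⥤ C) (hfin : IsFinitary H) (hm : PreservesNonemptyMonos H)
    (hproj : ∀ X : C, IsFP X →
      ∃ (P : C) (q : P ⟶ X), IsFP P ∧ LFF.IsStrongProjective P ∧ StrongEpi q)
    (hse : ∀ ⦃X Y : C⦄ (f : X ⟶ Y), StrongEpi f → StrongEpi (H.map f))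
    (X : Endofunctor.Coalgebra H) (hX : IsFG X.V) :
    ∃ (P : Endofunctor.Coalgebra H) (q : P ⟶ X), IsFP P.V ∧ StrongEpi q.f := by
  obtain ⟨V, q0, hVfp, hq0⟩ := LFFAux.exists_fp_cover hC hX
  obtain ⟨P0, q1, hPfp, hPproj, hq1⟩ := hproj V hVfp
  haveI := hq0; haveI := hq1
  have hqe : StrongEpi (q1 ≫ q0) := strongEpi_comp _ _
  obtain ⟨p, hp⟩ := hPproj (H.map (q1 ≫ q0)) (hse _ hqe) ((q1 ≫ q0) ≫ X.str)
  exact ⟨⟨P0, p⟩, ⟨q1 ≫ q0, hp⟩, hPfp, hqe⟩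
end
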